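/- arXiv:1205.1607 — 7 statements merged into one kernel-verified Lean document; each statement's English description precedes it below -/
import Mathlib

section
/- For the East model starting from the fully occupied configuration on (−∞,−1] with a frozen vacancy at the origin, the maximal distance ℓ(n) from the origin reachable by a vacancy under the constraint that at each time at most n vacancies are simultaneously present satisfies ℓ(n) = 2^n − 1 for all n ≥ 0. -/
/-- One legal East move on the interval `[-L,-1]` with a frozen vacancy at the origin `0`:
a configuration is encoded by the (finite) set `s` of its empty sites; the occupation at a
site `x ∈ [-L,-1]` may be flipped iff its East neighbour `x+1` is empty (the neighbour of
`-1` being the frozen vacancy at `0`); the resulting configuration must have at most `n`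
empty sites. -/
def EastStep (L : ℤ) (n : ℕ) (s s' : Finset ℤ) : Prop :=
  (∃ x : ℤ, -L ≤ x ∧ x ≤ -1 ∧ (x = -1 ∨ (x + 1) ∈ s) ∧
      ((x ∉ s ∧ s' = insert x s) ∨ (x ∈ s ∧ s' = s.erase x))) ∧ s'.card ≤ n

/-- `V(n)`: the set of configurations reachable from the fully occupied configuration
(no empty site) by legal East moves never exceeding `n` simultaneous empty sites. -/
def EastReach (L : ℤ) (n : ℕ) (s : Finset ℤ) : Prop :=
  Relation.ReflTransGen (EastStep L n) ∅ s

/-- `ℓ(n)`: the maximal distance from the origin of an empty site over all configurations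
in `V(n)` (with the convention `sup ∅ = 0`). -/
noncomputable def ellE (L : ℤ) (n : ℕ) : ℕ :=
  sSup {m : ℕ | ∃ s : Finset ℤ, EastReach L n s ∧ -(m : ℤ) ∈ s}

/-! ### Basic auxiliary definitions -/

/-- number of empty sites in the region of distances `(w, M]`, i.e. sites `x` with
`-M ≤ x ≤ -(w+1)`. -/
def rcnt (w M : ℤ) (s : Finset ℤ) : ℕ :=
  (s.filter (fun x => -M ≤ x ∧ x ≤ -(w+1))).card

lemma rcnt_le_card (w M : ℤ) (s : Finset ℤ) : rcnt w M s ≤ s.card :=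
  Finset.card_filter_le _ _

lemma rcnt_eq_zero_iff (w M : ℤ) (s : Finset ℤ) :
    rcnt w M s = 0 ↔ ∀ x ∈ s, ¬(-M ≤ x ∧ x ≤ -(w+1)) := by
  simp [rcnt, Finset.card_eq_zero, Finset.filter_eq_empty_iff]

lemma rcnt_ne_zero_of_mem {w M : ℤ} {s : Finset ℤ} {x : ℤ}
    (hx : x ∈ s) (h1 : -M ≤ x) (h2 : x ≤ -(w+1)) : rcnt w M s ≠ 0 := by
  intro h
  exact (rcnt_eq_zero_iff w M s).1 h x hx ⟨h1, h2⟩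

/-- nested regions: deeper wall gives a subset. -/
lemma rfilter_mono {w w' M : ℤ} (h : w ≤ w') (s : Finset ℤ) :
    (s.filter (fun x => -M ≤ x ∧ x ≤ -(w'+1))) ⊆ (s.filter (fun x => -M ≤ x ∧ x ≤ -(w+1))) := by
  intro x hx
  rw [Finset.mem_filter] at hx ⊢
  exact ⟨hx.1, hx.2.1, le_trans hx.2.2 (by linarith)⟩

lemma rcnt_mono_wall (w w' M : ℤ) (h : w ≤ w') (s : Finset ℤ) :
    rcnt w' M s ≤ rcnt w M s :=
  Finset.card_le_card (rfilter_mono h s)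

/-- if `a` is in the outer filter but not the inner, inner count drops by one. -/
lemma rcnt_le_sub_one {w w' M M' : ℤ} {s : Finset ℤ} {a : ℤ}
    (hsub : (s.filter (fun x => -M' ≤ x ∧ x ≤ -(w'+1))) ⊆ (s.filter (fun x => -M ≤ x ∧ x ≤ -(w+1))))
    (ha : a ∈ s) (haout : -M ≤ a ∧ a ≤ -(w+1)) (hain : ¬(-M' ≤ a ∧ a ≤ -(w'+1))) :
    rcnt w' M' s + 1 ≤ rcnt w M s := by
  have h1 : (s.filter (fun x => -M' ≤ x ∧ x ≤ -(w'+1))) ⊆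
      (s.filter (fun x => -M ≤ x ∧ x ≤ -(w+1))).erase a := by
    rw [Finset.subset_erase]
    refine ⟨hsub, ?_⟩
    intro hmem
    exact hain (Finset.mem_filter.1 hmem).2
  have h2 := Finset.card_le_card h1
  have h3 : a ∈ (s.filter (fun x => -M ≤ x ∧ x ≤ -(w+1))) :=
    Finset.mem_filter.2 ⟨ha, haout⟩
  have h4 := Finset.card_erase_of_mem h3
  have h5 : 1 ≤ (s.filter (fun x => -M ≤ x ∧ x ≤ -(w+1))).card := Finset.card_pos.2 ⟨a, h3⟩
  unfold rcnt
  omega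

lemma rcnt_le_sub_two {w w' M M' : ℤ} {s : Finset ℤ} {a b : ℤ}
    (hsub : (s.filter (fun x => -M' ≤ x ∧ x ≤ -(w'+1))) ⊆ (s.filter (fun x => -M ≤ x ∧ x ≤ -(w+1))))
    (ha : a ∈ s) (haout : -M ≤ a ∧ a ≤ -(w+1)) (hain : ¬(-M' ≤ a ∧ a ≤ -(w'+1)))
    (hb : b ∈ s) (hbout : -M ≤ b ∧ b ≤ -(w+1)) (hbin : ¬(-M' ≤ b ∧ b ≤ -(w'+1)))
    (hab : a ≠ b) :
    rcnt w' M' s + 2 ≤ rcnt w M s := by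
  have h1 : (s.filter (fun x => -M' ≤ x ∧ x ≤ -(w'+1))) ⊆
      (((s.filter (fun x => -M ≤ x ∧ x ≤ -(w+1))).erase a).erase b) := by
    rw [Finset.subset_erase]
    constructor
    · rw [Finset.subset_erase]
      refine ⟨hsub, fun hmem => hain (Finset.mem_filter.1 hmem).2⟩
    · intro hmem
      exact hbin (Finset.mem_filter.1 hmem).2
  have h2 := Finset.card_le_card h1
  have h3 : a ∈ (s.filter (fun x => -M ≤ x ∧ x ≤ -(w+1))) := Finset.mem_filter.2 ⟨ha, haout⟩
  have h3b : b ∈ (s.filter (fun x => -M ≤ x ∧ x ≤ -(w+1))).erase a :=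
    Finset.mem_erase.2 ⟨fun h => hab h.symm, Finset.mem_filter.2 ⟨hb, hbout⟩⟩
  have h4 := Finset.card_erase_of_mem h3
  have h4b := Finset.card_erase_of_mem h3b
  have h5 : 1 ≤ (s.filter (fun x => -M ≤ x ∧ x ≤ -(w+1))).card := Finset.card_pos.2 ⟨a, h3⟩
  have h6 : 1 ≤ ((s.filter (fun x => -M ≤ x ∧ x ≤ -(w+1))).erase a).card := Finset.card_pos.2 ⟨b, h3b⟩
  unfold rcnt
  omega

/-! ### Step reversal and basic reachability facts -/

lemma eastStep_rev {L : ℤ} {n : ℕ} {s s' : Finset ℤ}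
    (h : EastStep L n s s') (hc : s.card ≤ n) : EastStep L n s' s := by
  obtain ⟨⟨x, hx1, hx2, hsup, hcase⟩, _⟩ := h
  rcases hcase with ⟨hxs, he⟩ | ⟨hxs, he⟩
  · refine ⟨⟨x, hx1, hx2, ?_, Or.inr ⟨?_, ?_⟩⟩, hc⟩
    · rcases hsup with h | h
      · exact Or.inl h
      · exact Or.inr (he ▸ Finset.mem_insert_of_mem h)
    · exact he ▸ Finset.mem_insert_self x s
    · rw [he, Finset.erase_insert hxs]
  · refine ⟨⟨x, hx1, hx2, ?_, Or.inl ⟨?_, ?_⟩⟩, hc⟩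
    · rcases hsup with h | h
      · exact Or.inl h
      · refine Or.inr (he ▸ Finset.mem_erase.2 ⟨by omega, h⟩)
    · rw [he]; exact Finset.notMem_erase x s
    · rw [he, Finset.insert_erase hxs]
  
lemma reach_card {L : ℤ} {n : ℕ} {a b : Finset ℤ}
    (h : Relation.ReflTransGen (EastStep L n) a b) (ha : a.card ≤ n) : b.card ≤ n := by
  induction h with
  | refl => exact ha
  | tail _ hstep _ => exact hstep.2

lemma reach_rev {L : ℤ} {n : ℕ} {a b : Finset ℤ}
    (h : Relation.ReflTransGen (EastStep L n) a b) (ha : a.card ≤ n) :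
    Relation.ReflTransGen (EastStep L n) b a := by
  induction h with
  | refl => exact Relation.ReflTransGen.refl
  | @tail b' c hab hstep ih =>
      have hb' : b'.card ≤ n := reach_card hab ha
      exact Relation.ReflTransGen.trans (Relation.ReflTransGen.single (eastStep_rev hstep hb')) (ih)

lemma reach_mem_Icc {L : ℤ} {n : ℕ} {s : Finset ℤ}
    (h : Relation.ReflTransGen (EastStep L n) ∅ s) : ∀ x ∈ s, -L ≤ x ∧ x ≤ -1 := by
  induction h with
  | refl => intro x hx; simp at hx
  | @tail b c hab hstep ih =>
      obtain ⟨⟨x, hx1, hx2, _, hcase⟩, _⟩ := hstep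
      rcases hcase with ⟨_, he⟩ | ⟨_, he⟩
      · intro y hy
        rw [he, Finset.mem_insert] at hy
        rcases hy with rfl | hy
        · exact ⟨hx1, hx2⟩
        · exact ih y hy
      · intro y hy
        rw [he] at hy
        exact ih y (Finset.mem_of_mem_erase hy)

lemma exists_path {r : Finset ℤ → Finset ℤ → Prop} {a b : Finset ℤ}
    (h : Relation.ReflTransGen r a b) :
    ∃ (T : ℕ) (f : ℕ → Finset ℤ), f 0 = a ∧ f T = b ∧ ∀ t, t < T → r (f t) (f (t+1)) := by
  induction h with
  | refl => exact ⟨0, fun _ => a, rfl, rfl, by omega⟩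
  | @tail b' c hab hstep ih =>
      obtain ⟨T, f, h0, hT, hs⟩ := ih
      refine ⟨T+1, fun t => if t ≤ T then f t else c, by simp [h0], by simp, ?_⟩
      intro t ht
      by_cases h1 : t < T
      · simp only []
        rw [if_pos (le_of_lt h1), if_pos (Nat.succ_le_of_lt h1)]
        exact hs t h1
      · have ht' : t = T := by omega
        subst ht'
        simp only []
        rw [if_pos (le_refl t), if_neg (show ¬ t + 1 ≤ t by omega)]
        exact hT ▸ hstep

/-! ### part 2 : the main combinatorial window lemma -/

lemma rcnt_ne_zero_elim {w M : ℤ} {s : Finset ℤ} (h : rcnt w M s ≠ 0) :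
    ∃ x ∈ s, -M ≤ x ∧ x ≤ -(w+1) := by
  have : (s.filter (fun x => -M ≤ x ∧ x ≤ -(w+1))).Nonempty := by
    rw [← Finset.card_pos]
    unfold rcnt at h
    omega
  obtain ⟨x, hx⟩ := this
  rw [Finset.mem_filter] at hx
  exact ⟨x, hx.1, hx.2⟩

/-- if the budget cap at the entry site is `0`, the region stays empty. -/
lemma capZero (L : ℤ) (n : ℕ) (f : ℕ → Finset ℤ) (T : ℕ) (w M : ℤ) (hw : 0 ≤ w)
    (hsteps : ∀ t, t < T → EastStep L n (f t) (f (t+1)))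
    (hfresh : rcnt w M (f 0) = 0)
    (hcaps : ∀ t, t < T → ¬(((-(w+1) : ℤ) ∈ f t) ↔ ((-(w+1) : ℤ) ∈ f (t+1))) →
        rcnt w M (f (t+1)) = 0) :
    ∀ t, t ≤ T → rcnt w M (f t) = 0 := by
  intro t
  induction t with
  | zero => intro _; exact hfresh
  | succ t ihh =>
      intro ht
      have h0 : rcnt w M (f t) = 0 := ihh (by omega)
      by_contra hne
      obtain ⟨⟨x, hx1, hx2, hsup, hcase⟩, _⟩ := hsteps t (by omega)
      rcases hcase with ⟨hxs, he⟩ | ⟨hxs, he⟩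
      · -- insert case
        by_cases hpx : (-M ≤ x ∧ x ≤ -(w+1))
        · -- x is in the region
          rcases hsup with hxeq | hsupm
          · -- x = -1 : then w = 0 so x is the entry site
            have hwx : x = -(w+1) := by omega
            have : ¬(((-(w+1) : ℤ) ∈ f t) ↔ ((-(w+1) : ℤ) ∈ f (t+1))) := by
              rw [← hwx]
              intro hiff
              exact hxs (hiff.2 (he ▸ Finset.mem_insert_self x (f t)))
            exact hne (hcaps t (by omega) this)
          · by_cases hdeep : x + 1 ≤ -(w+1)
            · -- the supporting site is inside the (empty) region : impossible
              exact (rcnt_ne_zero_of_mem hsupm (by linarith) hdeep) h0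
            · -- x is the entry site
              have hwx : x = -(w+1) := by omega
              have : ¬(((-(w+1) : ℤ) ∈ f t) ↔ ((-(w+1) : ℤ) ∈ f (t+1))) := by
                rw [← hwx]
                intro hiff
                exact hxs (hiff.2 (he ▸ Finset.mem_insert_self x (f t)))
              exact hne (hcaps t (by omega) this)
        · -- x outside the region : count unchanged
          have : rcnt w M (f (t+1)) = rcnt w M (f t) := by
            unfold rcnt
            rw [he, Finset.filter_insert, if_neg hpx]
          omega
      · -- erase case : count cannot increase
        have : rcnt w M (f (t+1)) ≤ rcnt w M (f t) := by
          unfold rcnt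
          rw [he, Finset.filter_erase]
          exact Finset.card_le_card (Finset.erase_subset _ _)
        omega

lemma not_iff_comm' {a b : Prop} (h : ¬(a ↔ b)) : ¬(b ↔ a) := fun hba => h hba.symm

/-- The central combinatorial lemma for the East model.  Consider a legal path and a
region of distances `(w, M]` (sites `-M ≤ x ≤ -(w+1)`), initially empty, holding at most
`k` empty sites at all times, and such that any flip of the entry site `-(w+1)` happens
only when the region holds at most `k-1` empty sites (before and after).  Then at all
times: (a) if the region is nonempty it has an empty site at distance `≤ w + 2^(k-1) - 1`;
(b) every empty site of the region is at distance `≤ w + 2^k - 2`. -/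
lemma bLemma (L : ℤ) (n : ℕ) :
    ∀ (k : ℕ) (f : ℕ → Finset ℤ) (T : ℕ) (w M : ℤ), 0 ≤ w →
    (∀ t, t < T → EastStep L n (f t) (f (t+1))) →
    (∀ t, t ≤ T → (f t).card ≤ n) →
    rcnt w M (f 0) = 0 →
    (∀ t, t ≤ T → rcnt w M (f t) ≤ k) →
    (∀ t, t < T → ¬(((-(w+1) : ℤ) ∈ f t) ↔ ((-(w+1) : ℤ) ∈ f (t+1))) →
        rcnt w M (f t) ≤ k - 1 ∧ rcnt w M (f (t+1)) ≤ k - 1) →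
    ∀ t, t ≤ T →
      ((rcnt w M (f t) ≠ 0 → ∃ x ∈ f t, (-M ≤ x ∧ x ≤ -(w+1)) ∧ -x ≤ w + 2^(k-1) - 1)
      ∧ ∀ x ∈ f t, (-M ≤ x ∧ x ≤ -(w+1)) → -x ≤ w + (2:ℤ)^k - 2) := by
  intro k
  induction k with
  | zero =>
      intro f T w M hw hsteps hcards hfresh hbud hcaps t ht
      have h0 : rcnt w M (f t) = 0 := by have := hbud t ht; omega
      constructor
      · intro hne; exact absurd h0 hne
      · intro x hx ⟨h1, h2⟩
        exact absurd h0 (rcnt_ne_zero_of_mem hx h1 h2)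
  | succ k ih =>
      intro f T w M hw hsteps hcards hfresh hbud hcaps
      rcases Nat.eq_zero_or_pos k with rfl | hk1
      · -- k+1 = 1 : region always empty
        have hempty : ∀ t, t ≤ T → rcnt w M (f t) = 0 := by
          apply capZero L n f T w M hw hsteps hfresh
          intro t htT hflip
          have := (hcaps t htT hflip).2
          omega
        intro t ht
        constructor
        · intro hne; exact absurd (hempty t ht) hne
        · intro x hx ⟨h1, h2⟩
          exact absurd (hempty t ht) (rcnt_ne_zero_of_mem hx h1 h2)
      -- now k ≥ 1
      have h2kpos : (0:ℤ) < 2^k := pow_pos (by norm_num) k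
      have h2k2 : (2:ℤ) ≤ 2^k := by
        calc (2:ℤ) = 2^1 := (pow_one 2).symm
        _ ≤ 2^k := pow_le_pow_right₀ (by norm_num) hk1
      have h2succ : (2:ℤ)^(k+1) = 2^k + 2^k := by ring
      -- ===================== part (a) : the shallow-witness claim =====================
      have hC2 : ∀ t, t ≤ T → rcnt w M (f t) ≠ 0 →
          ∃ x ∈ f t, (-M ≤ x ∧ x ≤ -(w+1)) ∧ -x ≤ w + 2^k - 1 := by
        intro ts ht hne
        by_contra hno
        push_neg at hno
        -- every empty site of the region at time ts is deep
        obtain ⟨y₀, hy₀mem, hy₀1, hy₀2⟩ := rcnt_ne_zero_elim hne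
        have hy₀deep : y₀ ≤ -(w + 2^k) := by
          have := hno y₀ hy₀mem ⟨hy₀1, hy₀2⟩
          linarith
        have hM : w + 2^k ≤ M := by linarith
        -- reversed path
        set g : ℕ → Finset ℤ := fun s => f (ts - s) with hg
        have hgsteps : ∀ s, s < ts → EastStep L n (g s) (g (s+1)) := by
          intro s hs
          have hj : ts - s - 1 < T := by omega
          have hstep := hsteps (ts - s - 1) hj
          have he1 : ts - s - 1 + 1 = ts - s := by omega
          have he2 : ts - (s+1) = ts - s - 1 := by omega
          rw [he1] at hstep
          have : EastStep L n (f (ts - s)) (f (ts - s - 1)) :=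
            eastStep_rev hstep (hcards (ts - s - 1) (by omega))
          simpa [hg, he2] using this
        have hgcards : ∀ s, s ≤ ts → (g s).card ≤ n := fun s _ => hcards (ts - s) (by omega)
        -- first reversed time at which the deep region (beyond w + 2^k - 1) is empty
        have hQex : ∃ s, rcnt (w + 2^k - 1) M (g s) = 0 := by
          refine ⟨ts, ?_⟩
          have hg0 : g ts = f 0 := by simp [hg]
          rw [hg0]
          have := rcnt_mono_wall w (w + 2^k - 1) M (show w ≤ w + 2^k - 1 by linarith) (f 0)
          omega
        set τ := Nat.find hQex with hτ
        have hQτ : rcnt (w + 2^k - 1) M (g τ) = 0 := Nat.find_spec hQex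
        have hτle : τ ≤ ts := Nat.find_min' hQex (by
          have hg0 : g ts = f 0 := by simp [hg]
          rw [hg0]
          have := rcnt_mono_wall w (w + 2^k - 1) M (show w ≤ w + 2^k - 1 by linarith) (f 0)
          omega)
        have hQlt : ∀ s, s < τ → rcnt (w + 2^k - 1) M (g s) ≠ 0 := fun s hs => Nat.find_min hQex hs
        have hτpos : 0 < τ := by
          rcases Nat.eq_zero_or_pos τ with h0 | h
          · exfalso
            have hg00 : g 0 = f ts := by simp [hg]
            have : rcnt (w + 2^k - 1) M (g 0) ≠ 0 := by
              rw [hg00]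
              exact rcnt_ne_zero_of_mem hy₀mem hy₀1 (by linarith)
            rw [h0] at hQτ
            exact this hQτ
          · exact h
        -- the step erasing the last deep empty site
        have hstepτ : EastStep L n (g (τ-1)) (g τ) := by
          have := hgsteps (τ-1) (by omega)
          have he : τ - 1 + 1 = τ := by omega
          rwa [he] at this
        obtain ⟨⟨x₁, hx₁1, hx₁2, hsup, hcase⟩, _⟩ := hstepτ
        have hprevne := hQlt (τ-1) (by omega)
        rcases hcase with ⟨hxs, he⟩ | ⟨hxs, he⟩
        · -- insertion cannot empty the deep region
          exfalso
          have hsub : ((g (τ-1)).filter (fun x => -M ≤ x ∧ x ≤ -((w + 2^k - 1)+1))) ⊆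
              ((g τ).filter (fun x => -M ≤ x ∧ x ≤ -((w + 2^k - 1)+1))) := by
            rw [he]
            exact Finset.filter_subset_filter _ (Finset.subset_insert x₁ _)
          have := Finset.card_le_card hsub
          unfold rcnt at hprevne hQτ
          omega
        · -- erase case
          have hfe : ((g τ).filter (fun x => -M ≤ x ∧ x ≤ -((w + 2^k - 1)+1))) =
              ((g (τ-1)).filter (fun x => -M ≤ x ∧ x ≤ -((w + 2^k - 1)+1))).erase x₁ := by
            rw [he, Finset.filter_erase]
          have hemp : ((g τ).filter (fun x => -M ≤ x ∧ x ≤ -((w + 2^k - 1)+1))) = ∅ :=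
            Finset.card_eq_zero.1 hQτ
          have hsingle : ∀ z ∈ ((g (τ-1)).filter (fun x => -M ≤ x ∧ x ≤ -((w + 2^k - 1)+1))),
              z = x₁ := by
            intro z hz
            by_contra hzx
            have : z ∈ ((g τ).filter (fun x => -M ≤ x ∧ x ≤ -((w + 2^k - 1)+1))) := by
              rw [hfe]
              exact Finset.mem_erase.2 ⟨hzx, hz⟩
            rw [hemp] at this
            exact Finset.notMem_empty z this
          have hx₁mem : x₁ ∈ ((g (τ-1)).filter (fun x => -M ≤ x ∧ x ≤ -((w + 2^k - 1)+1))) := by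
            have hne' : ((g (τ-1)).filter (fun x => -M ≤ x ∧ x ≤ -((w + 2^k - 1)+1))).Nonempty := by
              rw [← Finset.card_pos]
              unfold rcnt at hprevne
              omega
            obtain ⟨z, hz⟩ := hne'
            have := hsingle z hz
            rwa [this] at hz
          rw [Finset.mem_filter] at hx₁mem
          have hx₁deep : x₁ ≤ -(w + 2^k) := by
            have := hx₁mem.2.2
            linarith
          rcases hsup with rfl | hsupm
          · -- x₁ = -1 impossible, the site is deep
            exfalso; linarith
          -- the supporting site x₁+1 lies exactly at distance w + 2^k - 1
          have hsupnotdeep : ¬(x₁ + 1 ≤ -((w + 2^k - 1)+1)) := by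
            intro hdeep
            have hmem : x₁ + 1 ∈ ((g (τ-1)).filter (fun x => -M ≤ x ∧ x ≤ -((w + 2^k - 1)+1))) :=
              Finset.mem_filter.2 ⟨hsupm, ⟨by linarith [hx₁mem.2.1], hdeep⟩⟩
            have := hsingle _ hmem
            omega
          have heq : x₁ + 1 = -(w + 2^k - 1) := by omega
          -- apply the induction hypothesis to the shallow region on the reversed path
          have happ := ih g (τ-1) w (w + 2^k - 1) hw
            (fun s hs => hgsteps s (by omega))
            (fun s hs => hgcards s (by omega))
            (by -- fresh at g 0 = f ts : all region sites at ts are deep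
              have hg00 : g 0 = f ts := by simp [hg]
              rw [hg00]
              rw [rcnt_eq_zero_iff]
              intro y hy ⟨h1, h2⟩
              have h1' : -M ≤ y := by linarith
              have := hno y hy ⟨h1', by linarith⟩
              linarith)
            (by -- budget k
              intro s hs
              obtain ⟨z, hzmem, hz1, hz2⟩ := rcnt_ne_zero_elim (hQlt s (by omega))
              have hsub : ((g s).filter (fun x => -(w + 2^k - 1) ≤ x ∧ x ≤ -(w+1))) ⊆
                  ((g s).filter (fun x => -M ≤ x ∧ x ≤ -(w+1))) := by
                intro y hy
                rw [Finset.mem_filter] at hy ⊢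
                exact ⟨hy.1, by constructor <;> [linarith [hy.2.1]; exact hy.2.2]⟩
              have hdrop := rcnt_le_sub_one hsub hzmem
                ⟨hz1, by linarith⟩ (by intro ⟨ha, _⟩; linarith)
              have hbd : rcnt w M (g s) ≤ k + 1 := hbud (ts - s) (by omega)
              omega)
            (by -- caps k-1
              intro s hs hflip
              have hj : ts - s - 1 < T := by omega
              have he1 : ts - s - 1 + 1 = ts - s := by omega
              have he2 : ts - (s+1) = ts - s - 1 := by omega
              have hflip' : ¬(((-(w+1) : ℤ) ∈ f (ts - s - 1)) ↔ ((-(w+1) : ℤ) ∈ f (ts - s - 1 + 1))) := by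
                rw [he1]
                apply not_iff_comm'
                simpa [hg, he2] using hflip
              have hcap := hcaps (ts - s - 1) hj hflip'
              rw [he1] at hcap
              -- at both ends there is a deep empty site, dropping the count by 1
              have hd1 : rcnt w (w + 2^k - 1) (g s) + 1 ≤ rcnt w M (g s) := by
                obtain ⟨z, hzmem, hz1, hz2⟩ := rcnt_ne_zero_elim (hQlt s (by omega))
                refine rcnt_le_sub_one ?_ hzmem ⟨hz1, by linarith⟩ (by intro ⟨ha, _⟩; linarith)
                intro y hy
                rw [Finset.mem_filter] at hy ⊢
                exact ⟨hy.1, by constructor <;> [linarith [hy.2.1]; exact hy.2.2]⟩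
              have hd2 : rcnt w (w + 2^k - 1) (g (s+1)) + 1 ≤ rcnt w M (g (s+1)) := by
                obtain ⟨z, hzmem, hz1, hz2⟩ := rcnt_ne_zero_elim (hQlt (s+1) (by omega))
                refine rcnt_le_sub_one ?_ hzmem ⟨hz1, by linarith⟩ (by intro ⟨ha, _⟩; linarith)
                intro y hy
                rw [Finset.mem_filter] at hy ⊢
                exact ⟨hy.1, by constructor <;> [linarith [hy.2.1]; exact hy.2.2]⟩
              have hgs : rcnt w M (g s) ≤ k := by
                have hgeq : g s = f (ts - s) := rfl
                rw [hgeq]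
                have := hcap.2
                omega
              have hgs1 : rcnt w M (g (s+1)) ≤ k := by
                have : g (s+1) = f (ts - s - 1) := by simp [hg, he2]
                rw [this]
                have := hcap.1
                omega
              omega)
          have hfin := (happ (τ-1) (le_refl _)).2 (x₁+1) hsupm
            ⟨by rw [heq], by linarith⟩
          rw [heq] at hfin
          simp only [neg_neg] at hfin
          linarith
      -- ===================== part (b) : the confinement claim =====================
      have hC1 : ∀ t, t ≤ T → ∀ x ∈ f t, (-M ≤ x ∧ x ≤ -(w+1)) → -x ≤ w + (2:ℤ)^(k+1) - 2 := by
        intro ts ht x hx ⟨hxM, hxw⟩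
        by_cases hshal : -x ≤ w + 2^k
        · rw [h2succ]; linarith
        push_neg at hshal
        have hxdeep : x ≤ -(w + 2^k + 1) := by linarith
        have hM' : w + 2^k + 1 ≤ M := by linarith
        -- last time before ts at which the far region (beyond w + 2^k) was empty
        have hP0 : rcnt (w + 2^k) M (f 0) = 0 := by
          have := rcnt_mono_wall w (w + 2^k) M (show w ≤ w + 2^k by linarith) (f 0)
          omega
        have hex : ∃ t1, t1 ≤ ts ∧ rcnt (w + 2^k) M (f t1) = 0 ∧
            ∀ u, t1 < u → u ≤ ts → rcnt (w + 2^k) M (f u) ≠ 0 := by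
          refine ⟨Nat.findGreatest (fun u => rcnt (w + 2^k) M (f u) = 0) ts,
            Nat.findGreatest_le ts,
            Nat.findGreatest_spec (P := fun u => rcnt (w + 2^k) M (f u) = 0)
              (Nat.zero_le ts) hP0, ?_⟩
          intro u h1 h2
          exact Nat.findGreatest_is_greatest
            (P := fun u => rcnt (w + 2^k) M (f u) = 0) h1 h2
        obtain ⟨t1, ht1le, ht1spec, hgt⟩ := hex
        -- apply the induction hypothesis to the far region on the window [t1, ts]
        have happ := ih (fun s => f (t1 + s)) (ts - t1) (w + 2^k) M (by linarith)
          (fun s hs => by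
            show EastStep L n (f (t1 + s)) (f (t1 + (s+1)))
            have := hsteps (t1 + s) (by omega)
            have he : t1 + s + 1 = t1 + (s + 1) := by omega
            rwa [he] at this)
          (fun s hs => by
            show (f (t1 + s)).card ≤ n
            exact hcards (t1 + s) (by omega))
          (by show rcnt (w + 2^k) M (f (t1 + 0)) = 0
              simpa using ht1spec)
          (by -- budget k in the far region
            intro s hs
            show rcnt (w + 2^k) M (f (t1 + s)) ≤ k
            by_cases hz : rcnt (w + 2^k) M (f (t1 + s)) = 0
            · omega
            · have hwne : rcnt w M (f (t1 + s)) ≠ 0 := by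
                intro h0
                have := rcnt_mono_wall w (w + 2^k) M (show w ≤ w + 2^k by linarith) (f (t1 + s))
                omega
              obtain ⟨y, hymem, hyreg, hybd⟩ := hC2 (t1+s) (by omega) hwne
              have hdrop := rcnt_le_sub_one
                (rfilter_mono (show w ≤ w + 2^k by linarith) (f (t1+s)))
                hymem hyreg (by intro ⟨_, hb⟩; linarith)
              have hbd : rcnt w M (f (t1+s)) ≤ k + 1 := hbud (t1+s) (by omega)
              omega)
          (by -- caps k-1 at the far entry site -(w + 2^k + 1)
            intro s hs hflip
            show rcnt (w + 2^k) M (f (t1 + s)) ≤ k - 1 ∧ rcnt (w + 2^k) M (f (t1 + (s+1))) ≤ k - 1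
            have he : t1 + s + 1 = t1 + (s + 1) := by omega
            have hflip2 : ¬((-((w + 2^k)+1) : ℤ) ∈ f (t1+s) ↔ (-((w + 2^k)+1) : ℤ) ∈ f (t1+s+1)) := by
              rw [he]; exact hflip
            obtain ⟨⟨x₂, hx₂1, hx₂2, hsup, hcase⟩, _⟩ := hsteps (t1+s) (by omega)
            -- the flipped site must be the far entry site
            have hx₂eq : x₂ = -((w + 2^k)+1) := by
              by_contra hne'
              apply hflip2
              rcases hcase with ⟨hxs, hee⟩ | ⟨hxs, hee⟩
              · rw [hee]
                constructor
                · intro h; exact Finset.mem_insert_of_mem h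
                · intro h
                  rcases Finset.mem_insert.1 h with h | h
                  · exact absurd h.symm hne'
                  · exact h
              · rw [hee]
                constructor
                · intro h; exact Finset.mem_erase.2 ⟨fun hc => hne' hc.symm, h⟩
                · intro h; exact Finset.mem_of_mem_erase h
            subst hx₂eq
            -- the supporting site -(w+2^k) is empty at both times
            have hsupmem : (-(w + 2^k) : ℤ) ∈ f (t1+s) := by
              rcases hsup with h | h
              · exfalso
                have h1 : (0:ℤ) ≤ w + 2^k := by linarith
                omega
              · have heq2 : -((w + 2^k) + 1) + 1 = (-(w + 2^k) : ℤ) := by ring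
                rwa [heq2] at h
            have hsupmem' : (-(w + 2^k) : ℤ) ∈ f (t1+s+1) := by
              rcases hcase with ⟨hxs, hee⟩ | ⟨hxs, hee⟩
              · rw [hee]; exact Finset.mem_insert_of_mem hsupmem
              · rw [hee]
                refine Finset.mem_erase.2 ⟨?_, hsupmem⟩
                intro h; omega
            -- both counts drop by 2 (supporting site + shallow witness)
            have key : ∀ v, v ≤ T → (-(w + 2^k) : ℤ) ∈ f v → rcnt (w + 2^k) M (f v) ≤ k - 1 := by
              intro v hv hsv
              have hsreg : -M ≤ (-(w + 2^k) : ℤ) ∧ (-(w + 2^k) : ℤ) ≤ -(w+1) := by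
                constructor <;> linarith
              have hwne : rcnt w M (f v) ≠ 0 :=
                rcnt_ne_zero_of_mem hsv hsreg.1 hsreg.2
              obtain ⟨y, hymem, hyreg, hybd⟩ := hC2 v hv hwne
              have hyne : y ≠ (-(w + 2^k) : ℤ) := by
                intro hc; rw [hc] at hybd; simp only [neg_neg] at hybd; linarith
              have hdrop := rcnt_le_sub_two
                (rfilter_mono (show w ≤ w + 2^k by linarith) (f v))
                hymem hyreg (by intro ⟨_, hb⟩; linarith)
                hsv hsreg (by intro ⟨_, hb⟩; linarith) hyne
              have hbd : rcnt w M (f v) ≤ k + 1 := hbud v hv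
              omega
            have hk1' : rcnt (w + 2^k) M (f (t1+s)) ≤ k - 1 := key (t1+s) (by omega) hsupmem
            have hk2' : rcnt (w + 2^k) M (f (t1+(s+1))) ≤ k - 1 := by
              rw [← he]; exact key (t1+s+1) (by omega) hsupmem'
            omega)
        have hts : t1 + (ts - t1) = ts := by omega
        have hfin := (happ (ts - t1) (le_refl _)).2 x
          (by show x ∈ f (t1 + (ts - t1)); rw [hts]; exact hx)
          ⟨hxM, hxdeep⟩
        rw [h2succ]
        linarith
      intro t ht
      refine ⟨?_, hC1 t ht⟩
      intro hne
      have := hC2 t ht hne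
      simpa using this

/-! ### part 3 : the constructive lower bound -/

/-- the dyadic staircase configuration below base `b` : empties at
`b - 2^(n-1), b - 2^(n-1) - 2^(n-2), …, b - (2^n - 1)`. -/
def Sset : ℕ → ℤ → Finset ℤ
  | 0, _ => ∅
  | (n+1), b => insert (b - 2^n) (Sset n (b - 2^n))

lemma Sset_subset : ∀ (n : ℕ) (b : ℤ), ∀ x ∈ Sset n b, b - 2^n + 1 ≤ x ∧ x ≤ b - 1 := by
  intro n
  induction n with
  | zero => intro b x hx; simp [Sset] at hx
  | succ n ih =>
      intro b x hx
      have h2 : (1:ℤ) ≤ 2^n := one_le_pow₀ (by norm_num)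
      have hpow : (2:ℤ)^(n+1) = 2^n + 2^n := by ring
      rw [Sset, Finset.mem_insert] at hx
      rcases hx with rfl | hx
      · constructor <;> [linarith [hpow]; linarith]
      · have := ih (b - 2^n) x hx
        constructor <;> [linarith [hpow, this.1]; linarith [this.2]]

lemma Sset_card : ∀ (n : ℕ) (b : ℤ), (Sset n b).card ≤ n := by
  intro n
  induction n with
  | zero => intro b; simp [Sset]
  | succ n ih =>
      intro b
      rw [Sset]
      calc (insert (b - 2^n) (Sset n (b - 2^n))).card ≤ (Sset n (b - 2^n)).card + 1 :=
            Finset.card_insert_le _ _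
      _ ≤ n + 1 := by have := ih (b - 2^n); omega

lemma Sset_mem_deep : ∀ (n : ℕ), 1 ≤ n → ∀ (b : ℤ), b - 2^n + 1 ∈ Sset n b := by
  intro n
  induction n with
  | zero => intro h; omega
  | succ n ih =>
      intro _ b
      rcases Nat.eq_zero_or_pos n with rfl | hn
      · rw [Sset]
        refine Finset.mem_insert.2 (Or.inl ?_)
        ring
      · rw [Sset, Finset.mem_insert]
        right
        have := ih hn (b - 2^n)
        have hpow : (2:ℤ)^(n+1) = 2^n + 2^n := by ring
        have heq : b - 2^n - 2^n + 1 = b - 2^(n+1) + 1 := by linarith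
        rwa [heq] at this

lemma low' (L : ℤ) (ntot : ℕ) :
    ∀ (n : ℕ) (C : Finset ℤ) (b : ℤ), b ≤ 0 → (b = 0 ∨ b ∈ C) →
    (∀ y ∈ C, ¬(b - 2^n + 1 ≤ y ∧ y ≤ b - 1)) →
    -L ≤ b - 2^n + 1 → C.card + n ≤ ntot →
    Relation.ReflTransGen (EastStep L ntot) C (C ∪ Sset n b) := by
  intro n
  induction n with
  | zero =>
      intro C b _ _ _ _ _
      simp only [Sset, Finset.union_empty]
      exact Relation.ReflTransGen.refl
  | succ n ih =>
      intro C b hb hsup hfree hroom hcard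
      have h2 : (1:ℤ) ≤ 2^n := one_le_pow₀ (by norm_num)
      have hpow : (2:ℤ)^(n+1) = 2^n + 2^n := by ring
      -- (1) build the staircase at base b
      have r₁ : Relation.ReflTransGen (EastStep L ntot) C (C ∪ Sset n b) := by
        apply ih C b hb hsup
        · intro y hy ⟨h1, h2'⟩
          exact hfree y hy ⟨by linarith, h2'⟩
        · linarith
        · omega
      -- (2) insert the empty site at q = b - 2^n
      have hq1 : -L ≤ b - 2^n := by linarith
      have hq2 : b - 2^n ≤ -1 := by linarith
      have hqnotmem : b - 2^n ∉ C ∪ Sset n b := by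
        intro hmem
        rcases Finset.mem_union.1 hmem with h | h
        · exact hfree _ h ⟨by linarith, by linarith⟩
        · have := Sset_subset n b _ h
          linarith [this.1]
      have hqsup : b - 2^n = -1 ∨ (b - 2^n) + 1 ∈ C ∪ Sset n b := by
        rcases Nat.eq_zero_or_pos n with rfl | hn
        · -- n = 0 : the supporting site is b itself
          rcases hsup with rfl | hbC
          · left; norm_num
          · right
            apply Finset.mem_union_left
            have : b - 2^(0:ℕ) + 1 = b := by norm_num
            rwa [this]
        · right
          apply Finset.mem_union_right
          have := Sset_mem_deep n hn b
          have heq : b - 2^n + 1 = (b - 2^n) + 1 := by ring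
          rwa [heq] at this
      have hstep : EastStep L ntot (C ∪ Sset n b) (insert (b - 2^n) (C ∪ Sset n b)) := by
        refine ⟨⟨b - 2^n, hq1, hq2, hqsup, Or.inl ⟨hqnotmem, rfl⟩⟩, ?_⟩
        calc (insert (b - 2^n) (C ∪ Sset n b)).card ≤ (C ∪ Sset n b).card + 1 :=
              Finset.card_insert_le _ _
        _ ≤ C.card + (Sset n b).card + 1 := by
              have := Finset.card_union_le C (Sset n b); omega
        _ ≤ ntot := by have := Sset_card n b; omega
      -- (3) remove the staircase again, keeping q
      have hCq : (insert (b - 2^n) C).card ≤ ntot := by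
        have := Finset.card_insert_le (b - 2^n) C; omega
      have r₃ : Relation.ReflTransGen (EastStep L ntot)
          (insert (b - 2^n) C) ((insert (b - 2^n) C) ∪ Sset n b) := by
        apply ih (insert (b - 2^n) C) b hb
        · rcases hsup with h | h
          · exact Or.inl h
          · exact Or.inr (Finset.mem_insert_of_mem h)
        · intro y hy ⟨h1, h2'⟩
          rcases Finset.mem_insert.1 hy with rfl | hy'
          · linarith
          · exact hfree y hy' ⟨by linarith, h2'⟩
        · linarith
        · have := Finset.card_insert_le (b - 2^n) C; omega
      have r₃' : Relation.ReflTransGen (EastStep L ntot)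
          ((insert (b - 2^n) C) ∪ Sset n b) (insert (b - 2^n) C) :=
        reach_rev r₃ hCq
      -- (4) rebuild the staircase at the lower base q
      have r₄ : Relation.ReflTransGen (EastStep L ntot)
          (insert (b - 2^n) C) ((insert (b - 2^n) C) ∪ Sset n (b - 2^n)) := by
        apply ih (insert (b - 2^n) C) (b - 2^n) (by linarith)
        · exact Or.inr (Finset.mem_insert_self _ _)
        · intro y hy ⟨h1, h2'⟩
          rcases Finset.mem_insert.1 hy with rfl | hy'
          · linarith
          · exact hfree y hy' ⟨by linarith, by linarith⟩
        · linarith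
        · have := Finset.card_insert_le (b - 2^n) C; omega
      -- assemble
      have he2 : insert (b - 2^n) (C ∪ Sset n b) = (insert (b - 2^n) C) ∪ Sset n b := by
        rw [Finset.insert_union]
      have he3 : (insert (b - 2^n) C) ∪ Sset n (b - 2^n) = C ∪ Sset (n+1) b := by
        rw [Sset, Finset.insert_union, Finset.union_insert]
      have step' : Relation.ReflTransGen (EastStep L ntot)
          (C ∪ Sset n b) ((insert (b - 2^n) C) ∪ Sset n b) := by
        rw [← he2]
        exact Relation.ReflTransGen.single hstep
      exact r₁.trans (step'.trans (r₃'.trans (he3 ▸ r₄)))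

/-! ### part 4 : the main theorem -/

lemma reach_zero {L : ℤ} {s : Finset ℤ} (h : EastReach L 0 s) : s = ∅ := by
  have := reach_card h (by simp)
  simpa [Finset.card_eq_zero] using this

lemma upper_bound {L : ℤ} {n : ℕ} {s : Finset ℤ} (hn : 1 ≤ n) (h : EastReach L n s) :
    ∀ x ∈ s, -x ≤ (2:ℤ)^n - 1 := by
  have hIcc := reach_mem_Icc h
  obtain ⟨T, f, h0, hT, hsteps⟩ := exists_path h
  have hcards : ∀ t, t ≤ T → (f t).card ≤ n := by
    intro t
    induction t with
    | zero => intro _; simp [h0]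
    | succ t ihh => intro ht; exact (hsteps t (by omega)).2
  have hkey : ∀ v, (-1:ℤ) ∈ f v → rcnt 1 L (f v) + 1 ≤ (f v).card := by
    intro v hv
    have hsub : ((f v).filter (fun x => -L ≤ x ∧ x ≤ -(1+1))) ⊆ (f v).erase (-1) := by
      rw [Finset.subset_erase]
      refine ⟨Finset.filter_subset _ _, ?_⟩
      intro hmem
      have := (Finset.mem_filter.1 hmem).2
      omega
    have h1 := Finset.card_le_card hsub
    have h2 := Finset.card_erase_of_mem hv
    have h3 : 1 ≤ (f v).card := Finset.card_pos.2 ⟨-1, hv⟩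
    unfold rcnt
    omega
  have happ := bLemma L n n f T 1 L (by norm_num)
    hsteps hcards (by simp [rcnt, h0])
    (fun t ht => le_trans (rcnt_le_card 1 L (f t)) (hcards t ht))
    (by -- caps at the entry site -2
      intro t ht hflip
      obtain ⟨⟨x₂, hx₂1, hx₂2, hsup, hcase⟩, _⟩ := hsteps t ht
      have hx₂eq : x₂ = -2 := by
        by_contra hne'
        apply hflip
        have h2 : (-(1+1) : ℤ) = -2 := by norm_num
        rw [h2]
        rcases hcase with ⟨hxs, hee⟩ | ⟨hxs, hee⟩
        · rw [hee]
          constructor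
          · intro hh; exact Finset.mem_insert_of_mem hh
          · intro hh
            rcases Finset.mem_insert.1 hh with hh | hh
            · exact absurd hh.symm hne'
            · exact hh
        · rw [hee]
          constructor
          · intro hh; exact Finset.mem_erase.2 ⟨fun hc => hne' hc.symm, hh⟩
          · intro hh; exact Finset.mem_of_mem_erase hh
      subst hx₂eq
      have hm1 : (-1:ℤ) ∈ f t := by
        rcases hsup with hh | hh
        · exfalso; omega
        · have : (-2:ℤ) + 1 = -1 := by norm_num
          rwa [this] at hh
      have hm1' : (-1:ℤ) ∈ f (t+1) := by
        rcases hcase with ⟨hxs, hee⟩ | ⟨hxs, hee⟩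
        · rw [hee]; exact Finset.mem_insert_of_mem hm1
        · rw [hee]
          refine Finset.mem_erase.2 ⟨by norm_num, hm1⟩
      constructor
      · have := hkey t hm1
        have := hcards t (by omega)
        omega
      · have := hkey (t+1) hm1'
        have := hcards (t+1) (by omega)
        omega)
  intro x hx
  have hxIcc := hIcc x hx
  by_cases hx1 : x = -1
  · subst hx1
    have h2 : (2:ℤ) ≤ 2^n := by
      calc (2:ℤ) = 2^1 := (pow_one 2).symm
      _ ≤ 2^n := pow_le_pow_right₀ (by norm_num) hn
    linarith
  · have hx2 : x ≤ -2 := by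
      have := hxIcc.2
      omega
    have := (happ T (le_refl T)).2 x (hT ▸ hx) ⟨hxIcc.1, by omega⟩
    linarith

theorem east_ell_eq' (n : ℕ) (L : ℤ) (hL : (2 : ℤ) ^ n - 1 ≤ L) :
    ellE L n = 2 ^ n - 1 := by
  rcases Nat.eq_zero_or_pos n with rfl | hn
  · -- n = 0 : nothing is reachable except ∅
    have hset : {m : ℕ | ∃ s : Finset ℤ, EastReach L 0 s ∧ -(m : ℤ) ∈ s} = ∅ := by
      ext m
      simp only [Set.mem_setOf_eq, Set.mem_empty_iff_false, iff_false]
      rintro ⟨s, hs, hmem⟩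
      rw [reach_zero hs] at hmem
      exact Finset.notMem_empty _ hmem
    rw [ellE, hset]
    simp
  · -- n ≥ 1
    have h2n : 1 ≤ 2^n := Nat.one_le_two_pow
    have hcast : ((2^n - 1 : ℕ) : ℤ) = (2:ℤ)^n - 1 := by
      push_cast [h2n]
      ring
    -- upper bound for every element of the set
    have hub : ∀ m ∈ {m : ℕ | ∃ s : Finset ℤ, EastReach L n s ∧ -(m : ℤ) ∈ s},
        m ≤ 2^n - 1 := by
      rintro m ⟨s, hs, hmem⟩
      have := upper_bound hn hs _ hmem
      have hle : (m : ℤ) ≤ ((2^n - 1 : ℕ) : ℤ) := by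
        rw [hcast]
        simpa using this
      exact_mod_cast hle
    -- the extreme configuration is reachable
    have hmem : (2^n - 1 : ℕ) ∈ {m : ℕ | ∃ s : Finset ℤ, EastReach L n s ∧ -(m : ℤ) ∈ s} := by
      refine ⟨Sset n 0, ?_, ?_⟩
      · have := low' L n n ∅ 0 (le_refl 0) (Or.inl rfl)
          (by intro y hy; simp at hy)
          (by linarith) (by simp)
        simpa [EastReach] using this
      · have hdeep := Sset_mem_deep n hn 0
        have : -((2^n - 1 : ℕ) : ℤ) = 0 - 2^n + 1 := by
          rw [hcast]; ring
        rwa [this]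
    apply le_antisymm
    · exact csSup_le ⟨2^n - 1, hmem⟩ hub
    · exact le_csSup ⟨2^n - 1, fun m hm => hub m hm⟩ hmem


/-- For the East model started from the fully occupied configuration on `(-∞,-1]`
(here on `[-L,-1]` with `L ≥ 2^n - 1`) with a frozen vacancy at the origin, the maximal
distance reachable by a vacancy using at most `n` simultaneous vacancies is
`ℓ(n) = 2^n - 1`. -/
theorem east_ell_eq (n : ℕ) (L : ℤ) (hL : (2 : ℤ) ^ n - 1 ≤ L) :
    ellE L n = 2 ^ n - 1 :=
  east_ell_eq' n L hL
end

section
/- Consider the two-block constrained dynamics on Ω_Λ = {0,1}^Λ with generator L_block f = c₁(π₂ f − f) + (π₁ f − f), where c₁(σ) ∈ {0,1} is the indicator that σ has at least one zero in the overlap strip I ⊆ B₂, π₁ f = π_{B₂}(f), π₂ f = π_{B₁}(f) are conditional expectation projections with π₁π₂ = π₂π₁ = π (the full mean). Then every eigenvalue λ of L_block with λ ∈ (−1, 0) satisfies λ = −1 + √(1 − π_{B₂}(c₁)). Consequently the spectral gap of the block dynamics is at least 1 − √ε where ε = π_{B₂}(c₁ = 0). -/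
/-- **Spectral analysis of the two-block constrained dynamics.**  On `Ω_Λ = Ω₁ × Ω₂`
(configurations on the blocks `B₁` and `B₂`) with product probability weights `μ₁ ⊗ μ₂`,
consider the generator `L_block f = c₁ (π₂ f - f) + (π₁ f - f)`, where
`π₁ f (σ) = Σ_y μ₂(y) f(σ₁, y)` averages over `B₂`, `π₂ f (σ) = Σ_x μ₁(x) f(x, σ₂)`
averages over `B₁`, and `c₁ ∈ {0,1}` (the indicator of a zero in the overlap strip
`I ⊆ B₂`) depends only on the `B₂`-coordinate.  Then every eigenvalue `λ ∈ (-1,0)`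
equals `-1 + √(1 - π_{B₂}(c₁))`, and every nonzero eigenvalue `λ` satisfies
`λ ≤ -(1 - √ε)` where `ε = π_{B₂}(c₁ = 0) = 1 - π_{B₂}(c₁)`; i.e. the spectral gap of the
block dynamics is at least `1 - √ε`. -/
theorem block_dynamics_eigenvalues {Ω₁ Ω₂ : Type*} [Fintype Ω₁] [Fintype Ω₂]
    (μ₁ : Ω₁ → ℝ) (μ₂ : Ω₂ → ℝ)
    (hμ₁pos : ∀ x, 0 < μ₁ x) (hμ₂pos : ∀ y, 0 < μ₂ y)
    (hμ₁ : ∑ x, μ₁ x = 1) (hμ₂ : ∑ y, μ₂ y = 1)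
    (c₁ : Ω₂ → ℝ) (hc : ∀ y, c₁ y = 0 ∨ c₁ y = 1)
    (f : Ω₁ × Ω₂ → ℝ) (hf : f ≠ 0) (lam : ℝ)
    (heig : ∀ σ : Ω₁ × Ω₂,
      c₁ σ.2 * ((∑ x, μ₁ x * f (x, σ.2)) - f σ) + ((∑ y, μ₂ y * f (σ.1, y)) - f σ)
        = lam * f σ) :
    ((-1 < lam ∧ lam < 0) → lam = -1 + Real.sqrt (1 - ∑ y, μ₂ y * c₁ y)) ∧
    (lam ≠ 0 → lam ≤ -(1 - Real.sqrt (1 - ∑ y, μ₂ y * c₁ y))) := by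
  classical
  set m : ℝ := ∑ y, μ₂ y * c₁ y with hm
  have hm1 : m ≤ 1 := by
    rw [hm, ← hμ₂]
    apply Finset.sum_le_sum
    intro y _
    rcases hc y with h | h <;> nlinarith [(hμ₂pos y).le]
  have hmnn : (0:ℝ) ≤ 1 - m := by linarith
  have hs0 : 0 ≤ Real.sqrt (1 - m) := Real.sqrt_nonneg _
  have hs2 : (Real.sqrt (1 - m))^2 = 1 - m := Real.sq_sqrt hmnn
  set g : Ω₂ → ℝ := fun y => ∑ x, μ₁ x * f (x, y) with hg
  set hfun : Ω₁ → ℝ := fun x => ∑ y, μ₂ y * f (x, y) with hh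
  set P : ℝ := ∑ y, μ₂ y * g y with hP
  have hswap : ∑ x, μ₁ x * hfun x = P := by
    rw [hP]
    simp only [hh, hg, Finset.mul_sum]
    rw [Finset.sum_comm]
    exact Finset.sum_congr rfl fun x _ => Finset.sum_congr rfl fun y _ => by ring
  have step1 : ∀ y, P - g y = lam * g y := by
    intro y
    have hy : ∑ x, μ₁ x * (c₁ y * (g y - f (x, y)) + (hfun x - f (x, y)))
        = ∑ x, μ₁ x * (lam * f (x, y)) := by
      apply Finset.sum_congr rfl
      intro x _
      rw [heig (x, y)]
    have e1 : ∑ x, μ₁ x * (c₁ y * (g y - f (x, y)) + (hfun x - f (x, y)))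
        = c₁ y * g y * (∑ x, μ₁ x) + (∑ x, μ₁ x * hfun x)
          - (c₁ y + 1) * (∑ x, μ₁ x * f (x, y)) :=
      calc ∑ x, μ₁ x * (c₁ y * (g y - f (x, y)) + (hfun x - f (x, y)))
          = ∑ x, ((c₁ y * g y) * μ₁ x + μ₁ x * hfun x
              - (c₁ y + 1) * (μ₁ x * f (x, y))) :=
            Finset.sum_congr rfl fun x _ => by ring
        _ = _ := by
            rw [Finset.sum_sub_distrib, Finset.sum_add_distrib, ← Finset.mul_sum,
              ← Finset.mul_sum]
    have e2 : ∑ x, μ₁ x * (lam * f (x, y)) = lam * g y := by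
      rw [hg, Finset.mul_sum]
      exact Finset.sum_congr rfl fun x _ => by ring
    have e3 : (∑ x, μ₁ x * f (x, y)) = g y := rfl
    rw [e1, e2, e3, hμ₁, hswap] at hy
    linarith
  have quad : lam ≠ 0 → lam ≠ -1 → lam ≠ -2 → (lam + 1)^2 = 1 - m := by
    intro h0 h1 h2
    have hP0 : P = 0 := by
      have hsum : ∑ y, μ₂ y * (P - g y) = ∑ y, μ₂ y * (lam * g y) :=
        Finset.sum_congr rfl fun y _ => by rw [step1 y]
      have l1 : ∑ y, μ₂ y * (P - g y) = P * (∑ y, μ₂ y) - ∑ y, μ₂ y * g y :=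
        calc ∑ y, μ₂ y * (P - g y) = ∑ y, (P * μ₂ y - μ₂ y * g y) :=
              Finset.sum_congr rfl fun y _ => by ring
          _ = _ := by rw [Finset.sum_sub_distrib, ← Finset.mul_sum]
      have l2 : ∑ y, μ₂ y * (lam * g y) = lam * ∑ y, μ₂ y * g y := by
        rw [Finset.mul_sum]
        exact Finset.sum_congr rfl fun y _ => by ring
      rw [l1, l2, ← hP, hμ₂] at hsum
      have : lam * P = 0 := by linarith
      rcases mul_eq_zero.mp this with h | h
      · exact absurd h h0
      · exact h
    have hg0 : ∀ y, g y = 0 := by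
      intro y
      have := step1 y
      rw [hP0] at this
      have h1lam : (1 + lam) * g y = 0 := by linarith
      rcases mul_eq_zero.mp h1lam with h | h
      · exact absurd (by linarith : lam = -1) h1
      · exact h
    have hpt : ∀ σ : Ω₁ × Ω₂, hfun σ.1 = (lam + 1 + c₁ σ.2) * f σ := by
      intro σ
      have h := heig σ
      have e3 : (∑ x, μ₁ x * f (x, σ.2)) = g σ.2 := rfl
      have e4 : (∑ y, μ₂ y * f (σ.1, y)) = hfun σ.1 := rfl
      rw [e3, e4, hg0 σ.2] at h
      linear_combination h
    obtain ⟨σ₀, hσ₀⟩ := Function.ne_iff.mp hf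
    have hfσ₀ : f σ₀ ≠ 0 := by simpa using hσ₀
    have hH0 : hfun σ₀.1 ≠ 0 := by
      rw [hpt σ₀]
      apply mul_ne_zero _ hfσ₀
      rcases hc σ₀.2 with h | h <;> rw [h] <;> intro hz
      · exact h1 (by linarith)
      · exact h2 (by linarith)
    have key : ∀ y, (1 + lam) * (2 + lam) * (μ₂ y * f (σ₀.1, y))
        = μ₂ y * hfun σ₀.1 * (2 + lam - c₁ y) := by
      intro y
      have hk := hpt (σ₀.1, y)
      rcases hc y with h | h <;> simp only [h] at hk ⊢
      · linear_combination (-(μ₂ y * (2 + lam))) * hk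
      · linear_combination (-(μ₂ y * (1 + lam))) * hk
    have hsum2 : ∑ y, (1 + lam) * (2 + lam) * (μ₂ y * f (σ₀.1, y))
        = ∑ y, μ₂ y * hfun σ₀.1 * (2 + lam - c₁ y) :=
      Finset.sum_congr rfl fun y _ => key y
    have l3 : ∑ y, (1 + lam) * (2 + lam) * (μ₂ y * f (σ₀.1, y))
        = (1 + lam) * (2 + lam) * hfun σ₀.1 := by
      rw [← Finset.mul_sum]
    have l4 : ∑ y, μ₂ y * hfun σ₀.1 * (2 + lam - c₁ y)
        = hfun σ₀.1 * ((2 + lam) * (∑ y, μ₂ y) - m) :=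
      calc ∑ y, μ₂ y * hfun σ₀.1 * (2 + lam - c₁ y)
          = ∑ y, (hfun σ₀.1 * ((2 + lam) * μ₂ y) - hfun σ₀.1 * (μ₂ y * c₁ y)) :=
            Finset.sum_congr rfl fun y _ => by ring
        _ = hfun σ₀.1 * ((2 + lam) * (∑ y, μ₂ y)) - hfun σ₀.1 * m := by
            rw [Finset.sum_sub_distrib, ← Finset.mul_sum, ← Finset.mul_sum,
              ← Finset.mul_sum, ← hm]
        _ = _ := by ring
    rw [l3, l4, hμ₂] at hsum2
    have hcan : hfun σ₀.1 * ((1 + lam) * (2 + lam))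
        = hfun σ₀.1 * ((2 + lam) * 1 - m) := by linear_combination hsum2
    have := mul_left_cancel₀ hH0 hcan
    linear_combination this
  constructor
  · rintro ⟨hl1, hl2⟩
    have hq := quad (ne_of_lt hl2) (by linarith) (by linarith)
    have : Real.sqrt ((lam + 1)^2) = lam + 1 := Real.sqrt_sq (by linarith)
    rw [hq] at this
    linarith
  · intro h0
    by_cases h1 : lam = -1
    · rw [h1]; linarith
    by_cases h2 : lam = -2
    · rw [h2]; linarith
    have hq := quad h0 h1 h2
    nlinarith [hq, hs2, hs0, sq_nonneg (lam + 1 - Real.sqrt (1 - m)),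
      sq_nonneg (lam + 1 + Real.sqrt (1 - m))]
end

section
/- For p ∈ (0,1), the supremum over α ∈ [0,1] of (1+p)α² − 1 + 2α√((1−α²)p(1−p)) is at most p·(1−p)/(1+p) + p, which is strictly less than 1. -/
/-- For `p ∈ (0,1)`, the supremum over `α ∈ [0,1]` of
`(1+p)α² - 1 + 2α√((1-α²)p(1-p))` is at most `p(1-p)/(1+p) + p`, which is
strictly less than `1`. -/
theorem persistence_sup_bound (p : ℝ) (hp : 0 < p) (hp1 : p < 1) :
    (∀ α : ℝ, 0 ≤ α → α ≤ 1 →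
      (1 + p) * α ^ 2 - 1 + 2 * α * Real.sqrt ((1 - α ^ 2) * p * (1 - p))
        ≤ p * (1 - p) / (1 + p) + p) ∧
    p * (1 - p) / (1 + p) + p < 1 := by
  have hq : 0 < 1 - p := by linarith
  have h1p : 0 < 1 + p := by linarith
  constructor
  · intro α hα0 hα1
    have hα2 : (0:ℝ) ≤ 1 - α ^ 2 := by nlinarith
    set a := p * (1 - p) / (1 + p) with ha
    set b := (1 + p) * (1 - α ^ 2) with hb
    have haa : 0 ≤ a := by positivity
    have hbb : 0 ≤ b := by positivity
    have hab : (1 - α ^ 2) * p * (1 - p) = a * b := by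
      rw [ha, hb, div_mul_eq_mul_div, eq_div_iff (ne_of_gt h1p)]; ring
    have hs : Real.sqrt ((1 - α ^ 2) * p * (1 - p)) = Real.sqrt a * Real.sqrt b := by
      rw [hab, Real.sqrt_mul haa]
    have h2 : 2 * (Real.sqrt a * Real.sqrt b) ≤ a + b := by
      nlinarith [sq_nonneg (Real.sqrt a - Real.sqrt b), Real.sq_sqrt haa, Real.sq_sqrt hbb]
    have hmul : 2 * α * Real.sqrt ((1 - α ^ 2) * p * (1 - p))
        ≤ 2 * (Real.sqrt a * Real.sqrt b) := by
      rw [hs]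
      have hnn : 0 ≤ Real.sqrt a * Real.sqrt b := by positivity
      nlinarith
    have hfin : (1 + p) * α ^ 2 - 1 + (a + b) = a + p := by rw [hb]; ring
    linarith
  · rw [div_add' _ _ _ (ne_of_gt h1p), div_lt_one h1p]
    nlinarith
end

section
/- Let L be a self-adjoint Markov generator on L²(π) with spectral gap γ > 0, and let V be multiplication by a function with 0 ≤ V ≤ 1. For λ > 0, the supremum β_λ of the spectrum of H_λ = L + λV satisfies β_λ/λ ≤ sup_{0≤α≤1} { (1 − γ/λ)(1−α²) + π(V)α² + 2α√((1−α²)·π(V)·(1−π(V))) }. -/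
set_option maxHeartbeats 1000000 in
/-- **Feynman–Kac spectral bound.**  Let `L` be a self-adjoint (w.r.t. the probability
measure `π` on a finite state space) Markov generator with `L 1 = 0` and spectral gap
`γ > 0`, and let `V` be multiplication by a function with `0 ≤ V ≤ 1`.  For `λ > 0`, the
top of the spectrum `β_λ` of `H_λ = L + λ V`, i.e. the supremum of `⟨f, H_λ f⟩` over unit
vectors `f`, satisfies
`β_λ/λ ≤ sup_{0≤α≤1} {(1-γ/λ)(1-α²) + π(V)α² + 2α √((1-α²) π(V)(1-π(V)))}`. -/

theorem feynman_kac_top_bound {Ω : Type*} [Fintype Ω]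
    (π : Ω → ℝ) (hπ : ∀ x, 0 < π x) (hπ1 : ∑ x, π x = 1)
    (L : (Ω → ℝ) →ₗ[ℝ] (Ω → ℝ))
    (hsym : ∀ f g : Ω → ℝ, ∑ x, π x * f x * L g x = ∑ x, π x * g x * L f x)
    (hconst : L (fun _ => 1) = 0)
    (γ : ℝ) (hγ : 0 < γ)
    (hgap : ∀ g : Ω → ℝ, (∑ x, π x * g x) = 0 →
      ∑ x, π x * g x * L g x ≤ -γ * ∑ x, π x * g x ^ 2)
    (V : Ω → ℝ) (hV0 : ∀ x, 0 ≤ V x) (hV1 : ∀ x, V x ≤ 1)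
    (lam : ℝ) (hlam : 0 < lam)
    (f : Ω → ℝ) (hf : ∑ x, π x * f x ^ 2 = 1) :
    ∃ α : ℝ, 0 ≤ α ∧ α ≤ 1 ∧
      ∑ x, π x * f x * (L f x + lam * V x * f x) ≤
        lam * ((1 - γ / lam) * (1 - α ^ 2) + (∑ x, π x * V x) * α ^ 2
          + 2 * α * Real.sqrt ((1 - α ^ 2) * (∑ x, π x * V x) * (1 - ∑ x, π x * V x))) := by
  classical
  set a : ℝ := ∑ x, π x * f x with ha
  set g : Ω → ℝ := fun x => f x - a with hg
  set pV : ℝ := ∑ x, π x * V x with hpV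
  have hπx : ∀ x, (0:ℝ) ≤ π x := fun x => (hπ x).le
  -- mean-zero of g
  have hg0 : ∑ x, π x * g x = 0 := by
    have : ∀ x, π x * g x = π x * f x - a * π x := fun x => by simp [hg]; ring
    rw [Finset.sum_congr rfl fun x _ => this x, Finset.sum_sub_distrib, ← Finset.mul_sum,
      hπ1, ← ha]
    ring
  -- norm of g
  have hgg : ∑ x, π x * g x ^ 2 = 1 - a ^ 2 := by
    have : ∀ x, π x * g x ^ 2 = (π x * f x ^ 2 - 2 * a * (π x * f x)) + a ^ 2 * π x :=
      fun x => by simp [hg]; ring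
    rw [Finset.sum_congr rfl fun x _ => this x, Finset.sum_add_distrib,
      Finset.sum_sub_distrib, ← Finset.mul_sum, ← Finset.mul_sum, hf, hπ1, ← ha]
    ring
  have hggnn : 0 ≤ ∑ x, π x * g x ^ 2 :=
    Finset.sum_nonneg fun x _ => mul_nonneg (hπx x) (sq_nonneg _)
  have ha2 : a ^ 2 ≤ 1 := by nlinarith
  -- L f = L g
  have hLf : L f = L g := by
    have hfeq : f = g + a • (fun _ => (1:ℝ)) := funext fun x => by simp [hg]
    rw [hfeq, map_add, map_smul, hconst, smul_zero, add_zero]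
  have hsum1 : ∑ x, π x * L g x = 0 := by
    have h := hsym (fun _ => 1) g
    simp only [hconst, mul_one, Pi.zero_apply, mul_zero, Finset.sum_const_zero] at h
    exact h
  have hfLf : ∑ x, π x * f x * L f x = ∑ x, π x * g x * L g x := by
    rw [hLf]
    have : ∀ x, π x * f x * L g x = π x * g x * L g x + a * (π x * L g x) :=
      fun x => by simp [hg]; ring
    rw [Finset.sum_congr rfl fun x _ => this x, Finset.sum_add_distrib, ← Finset.mul_sum,
      hsum1, mul_zero, add_zero]
  have hgapg : ∑ x, π x * g x * L g x ≤ -γ * (1 - a ^ 2) := by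
    have := hgap g hg0
    rwa [hgg] at this
  -- pV bounds
  have hpV0 : 0 ≤ pV := Finset.sum_nonneg fun x _ => mul_nonneg (hπx x) (hV0 x)
  have hpV1 : pV ≤ 1 := by
    rw [← hπ1]
    exact Finset.sum_le_sum fun x _ => by nlinarith [hπx x, hV1 x]
  -- variance bound
  have hvar : ∑ x, π x * (V x - pV) ^ 2 ≤ pV * (1 - pV) := by
    have h1 : ∑ x, π x * (V x - pV) ^ 2
        = (∑ x, π x * V x ^ 2) - pV ^ 2 := by
      have : ∀ x, π x * (V x - pV) ^ 2
          = (π x * V x ^ 2 - 2 * pV * (π x * V x)) + pV ^ 2 * π x := fun x => by ring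
      rw [Finset.sum_congr rfl fun x _ => this x, Finset.sum_add_distrib,
        Finset.sum_sub_distrib, ← Finset.mul_sum, ← Finset.mul_sum, hπ1, ← hpV]
      ring
    have h2 : ∑ x, π x * V x ^ 2 ≤ pV :=
      Finset.sum_le_sum fun x _ => by nlinarith [mul_nonneg (hπx x) (mul_nonneg (hV0 x) (sub_nonneg.2 (hV1 x)))]
    nlinarith
  -- Cauchy-Schwarz
  have hcs := Finset.sum_mul_sq_le_sq_mul_sq Finset.univ
    (fun x => Real.sqrt (π x) * (V x - pV)) (fun x => Real.sqrt (π x) * g x)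
  have hsq : ∀ x, Real.sqrt (π x) * Real.sqrt (π x) = π x := fun x =>
    Real.mul_self_sqrt (hπx x)
  have hcs' : (∑ x, π x * (V x - pV) * g x) ^ 2
      ≤ (∑ x, π x * (V x - pV) ^ 2) * ∑ x, π x * g x ^ 2 := by
    have e1 : ∀ x, (Real.sqrt (π x) * (V x - pV)) * (Real.sqrt (π x) * g x)
        = π x * (V x - pV) * g x := fun x => by rw [show (Real.sqrt (π x) * (V x - pV)) * (Real.sqrt (π x) * g x) = (Real.sqrt (π x) * Real.sqrt (π x)) * ((V x - pV) * g x) from by ring, hsq x]; ring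
    have e2 : ∀ x, (Real.sqrt (π x) * (V x - pV)) ^ 2 = π x * (V x - pV) ^ 2 := fun x => by
      rw [mul_pow, sq, hsq x]
    have e3 : ∀ x, (Real.sqrt (π x) * g x) ^ 2 = π x * g x ^ 2 := fun x => by
      rw [mul_pow, sq, hsq x]
    rw [Finset.sum_congr rfl fun x _ => (e1 x).symm,
      Finset.sum_congr rfl fun x _ => (e2 x).symm,
      Finset.sum_congr rfl fun x _ => (e3 x).symm]
    exact hcs
  have hVgW : ∑ x, π x * V x * g x = ∑ x, π x * (V x - pV) * g x := by
    have : ∀ x, π x * (V x - pV) * g x = π x * V x * g x - pV * (π x * g x) :=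
      fun x => by ring
    rw [Finset.sum_congr rfl fun x _ => this x, Finset.sum_sub_distrib, ← Finset.mul_sum,
      hg0, mul_zero, sub_zero]
  have hS2 : (∑ x, π x * V x * g x) ^ 2 ≤ (1 - a ^ 2) * pV * (1 - pV) := by
    rw [hVgW]
    calc (∑ x, π x * (V x - pV) * g x) ^ 2
        ≤ (∑ x, π x * (V x - pV) ^ 2) * ∑ x, π x * g x ^ 2 := hcs'
      _ ≤ (pV * (1 - pV)) * (1 - a ^ 2) := by
          rw [hgg]
          apply mul_le_mul_of_nonneg_right hvar (by linarith)
      _ = (1 - a ^ 2) * pV * (1 - pV) := by ring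
  have habsS : |∑ x, π x * V x * g x| ≤ Real.sqrt ((1 - a ^ 2) * pV * (1 - pV)) := by
    rw [← Real.sqrt_sq_eq_abs]
    exact Real.sqrt_le_sqrt hS2
  have hkey : 2 * a * (∑ x, π x * V x * g x)
      ≤ 2 * |a| * Real.sqrt ((1 - a ^ 2) * pV * (1 - pV)) := by
    calc 2 * a * (∑ x, π x * V x * g x) ≤ 2 * |a * (∑ x, π x * V x * g x)| := by
          nlinarith [le_abs_self (a * (∑ x, π x * V x * g x))]
      _ = 2 * (|a| * |∑ x, π x * V x * g x|) := by rw [abs_mul]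
      _ ≤ 2 * (|a| * Real.sqrt ((1 - a ^ 2) * pV * (1 - pV))) := by
          have := mul_le_mul_of_nonneg_left habsS (abs_nonneg a)
          linarith
      _ = 2 * |a| * Real.sqrt ((1 - a ^ 2) * pV * (1 - pV)) := by ring
  -- potential term decomposition
  have hVf : ∑ x, π x * V x * f x ^ 2
      = a ^ 2 * pV + 2 * a * (∑ x, π x * V x * g x) + ∑ x, π x * V x * g x ^ 2 := by
    have : ∀ x, π x * V x * f x ^ 2
        = a ^ 2 * (π x * V x) + 2 * a * (π x * V x * g x) + π x * V x * g x ^ 2 :=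
      fun x => by simp [hg]; ring
    rw [Finset.sum_congr rfl fun x _ => this x, Finset.sum_add_distrib,
      Finset.sum_add_distrib, ← Finset.mul_sum, ← Finset.mul_sum, ← hpV]
  have hVgg : ∑ x, π x * V x * g x ^ 2 ≤ 1 - a ^ 2 := by
    rw [← hgg]
    exact Finset.sum_le_sum fun x _ => by nlinarith [mul_nonneg (mul_nonneg (hπx x) (sub_nonneg.2 (hV1 x))) (sq_nonneg (g x))]
  -- split LHS
  have hsplit : ∑ x, π x * f x * (L f x + lam * V x * f x)
      = (∑ x, π x * f x * L f x) + lam * ∑ x, π x * V x * f x ^ 2 := by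
    rw [Finset.mul_sum, ← Finset.sum_add_distrib]
    exact Finset.sum_congr rfl fun x _ => by ring
  refine ⟨|a|, abs_nonneg a, by nlinarith [abs_nonneg a, sq_abs a], ?_⟩
  rw [hsplit, hfLf, hVf, sq_abs]
  have hrhs : lam * ((1 - γ / lam) * (1 - a ^ 2) + pV * a ^ 2
      + 2 * |a| * Real.sqrt ((1 - a ^ 2) * pV * (1 - pV)))
      = (lam - γ) * (1 - a ^ 2) + lam * (pV * a ^ 2)
      + lam * (2 * |a| * Real.sqrt ((1 - a ^ 2) * pV * (1 - pV))) := by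
    field_simp
  rw [hrhs]
  have h1 : lam * (2 * a * (∑ x, π x * V x * g x))
      ≤ lam * (2 * |a| * Real.sqrt ((1 - a ^ 2) * pV * (1 - pV))) :=
    mul_le_mul_of_nonneg_left hkey hlam.le
  have h2 : lam * (∑ x, π x * V x * g x ^ 2) ≤ lam * (1 - a ^ 2) :=
    mul_le_mul_of_nonneg_left hVgg hlam.le
  nlinarith [hgapg]
end

section
/- Let m be the probability measure on {1,…,L} with m(k) = q p^{k−1} for 1 ≤ k ≤ L−1 and m(L) = p^{L−1}, where p = 1−q, q ∈ (0,1). For the test function g(k) = λ^{k−1} with pλ = 1 − ε, as ε → 0 one has m(g) = 1 + q(L−1) + o(1) and m(g log g) = (1/2)(L−1)(qL + 2p)·log(1/p) + o(1). Consequently the entropy Ent_m(g) = m(g log(g/m(g))) is bounded below by c·L² + o(1) for some constant c = c(q) > 0 independent of L. -/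
open Filter Topology

noncomputable section

/-- The law `m` on `{1,…,L}` of the position of the leftmost empty site:
`m(k) = q p^{k-1}` for `1 ≤ k ≤ L-1` and `m(L) = p^{L-1}`, with `p = 1-q`. -/
def mwt (q : ℝ) (L k : ℕ) : ℝ :=
  if k = L then (1 - q) ^ (L - 1) else q * (1 - q) ^ (k - 1)

/-- The test function `g(k) = λ^{k-1}` with `pλ = 1 - ε`. -/
def gTest (q ε : ℝ) (k : ℕ) : ℝ := ((1 - ε) / (1 - q)) ^ (k - 1)

def mg (q : ℝ) (L : ℕ) (ε : ℝ) : ℝ :=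
  ∑ k ∈ Finset.Icc 1 L, mwt q L k * gTest q ε k

def mgLog (q : ℝ) (L : ℕ) (ε : ℝ) : ℝ :=
  ∑ k ∈ Finset.Icc 1 L, mwt q L k * gTest q ε k * Real.log (gTest q ε k)

/-- The entropy `Ent_m(g) = m(g log g) - m(g) log m(g)`. -/
def entm (q : ℝ) (L : ℕ) (ε : ℝ) : ℝ :=
  mgLog q L ε - mg q L ε * Real.log (mg q L ε)

/-- Padé upper bound: `log y ≤ (y - 1/y)/2` for `y ≥ 1`. -/
lemma log_le_half (y : ℝ) (hy : 1 ≤ y) : Real.log y ≤ (y - 1/y) / 2 := by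
  have hy0 : (0:ℝ) < y := lt_of_lt_of_le one_pos hy
  set u : ℝ := (y - 1/y) / 2 with hu
  have h1y : 1/y ≤ 1 := by rw [div_le_one hy0]; exact hy
  have hu0 : 0 ≤ u := by rw [hu]; have : 1/y ≤ y := le_trans h1y hy; linarith
  have hexp : 1 + u + u^2/2 ≤ Real.exp u := by
    have h := Real.sum_le_exp_of_nonneg hu0 3
    simp [Finset.sum_range_succ] at h
    nlinarith [h]
  have hyu : y ≤ 1 + u + u^2/2 := by
    rw [hu]
    have h4 : (0:ℝ) ≤ (y-1)^4 := by positivity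
    have hv : y * (1/y) = 1 := mul_one_div_cancel (ne_of_gt hy0)
    have hy2 : (0:ℝ) < y^2 := by positivity
    nlinarith [h4, hv, hy2, sq_nonneg (y - 1/y), mul_pos hy0 hy0]
  calc Real.log y ≤ Real.log (Real.exp u) := by
        apply Real.log_le_log hy0; linarith
    _ = u := Real.log_exp u

/-- `(1+x) log(1+x) ≤ x + x²/2` for `x ≥ 0`. -/
lemma xlogx_le (x : ℝ) (hx : 0 ≤ x) : (1+x) * Real.log (1+x) ≤ x + x^2/2 := by
  have h1x : (0:ℝ) < 1 + x := by linarith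
  have h := log_le_half (1+x) (by linarith)
  have h2 : (1+x) * Real.log (1+x) ≤ (1+x) * (((1+x) - 1/(1+x))/2) :=
    mul_le_mul_of_nonneg_left h h1x.le
  have h3 : (1+x) * (((1+x) - 1/(1+x))/2) = x + x^2/2 := by
    field_simp
    ring
  linarith

/-- Padé lower bound: `2(z-1)/(z+1) ≤ log z` for `z ≥ 1`. -/
lemma pade_log (z : ℝ) (hz : 1 ≤ z) : 2*(z-1)/(z+1) ≤ Real.log z := by
  set f : ℝ → ℝ := fun y => Real.log y + 4*(y+1)⁻¹ with hf
  have hderiv : ∀ y : ℝ, 1 ≤ y → HasDerivAt f (y⁻¹ - 4/(y+1)^2) y := by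
    intro y hy
    have hy0 : y ≠ 0 := by intro h; rw [h] at hy; norm_num at hy
    have h1 : HasDerivAt Real.log y⁻¹ y := Real.hasDerivAt_log hy0
    have h2 : HasDerivAt (fun y : ℝ => y + 1) 1 y := (hasDerivAt_id y).add_const 1
    have h3 : HasDerivAt (fun y : ℝ => (y+1)⁻¹) (-1/(y+1)^2) y := by
      have := h2.inv (by linarith : y + 1 ≠ 0)
      exact this
    have h4 := h1.add (h3.const_mul 4)
    rw [show y⁻¹ - 4/(y+1)^2 = y⁻¹ + 4 * (-1/(y+1)^2) by ring]
    exact h4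
  have hcont : ContinuousOn f (Set.Ici 1) := by
    apply ContinuousOn.add
    · apply Real.continuousOn_log.mono
      intro y hy
      simp only [Set.mem_Ici] at hy
      simp only [Set.mem_compl_iff, Set.mem_singleton_iff]
      intro h; rw [h] at hy; norm_num at hy
    · apply ContinuousOn.mul continuousOn_const
      apply ContinuousOn.inv₀
      · fun_prop
      · intro y hy
        simp only [Set.mem_Ici] at hy
        intro h; nlinarith
  have hmono : MonotoneOn f (Set.Ici 1) := by
    apply monotoneOn_of_deriv_nonneg (convex_Ici 1) hcont
    · intro y hy
      rw [interior_Ici] at hy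
      exact ((hderiv y (le_of_lt hy)).differentiableAt).differentiableWithinAt
    · intro y hy
      rw [interior_Ici] at hy
      rw [(hderiv y hy.le).deriv]
      have hy0 : (0:ℝ) < y := lt_trans one_pos hy
      have : y⁻¹ - 4/(y+1)^2 = (y-1)^2/(y*(y+1)^2) := by
        field_simp
        ring
      rw [this]
      positivity
  have hle := hmono (Set.mem_Ici.mpr le_rfl) (Set.mem_Ici.mpr hz) hz
  have hz1 : (0:ℝ) < z + 1 := by linarith
  have hf1 : f 1 = 2 := by simp [hf, Real.log_one]; norm_num
  have hfz : f z = Real.log z + 4*(z+1)⁻¹ := rfl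
  rw [hf1, hfz] at hle
  have h4 : 2*(z-1)/(z+1) = 2 - 4*(z+1)⁻¹ := by field_simp; ring
  rw [h4]
  linarith

lemma gauss (n : ℕ) : ∑ k ∈ Finset.Icc 1 n, ((k-1 : ℕ) : ℝ) = n*(n-1)/2 := by
  induction n with
  | zero => simp
  | succ m ih =>
    rw [Finset.sum_Icc_succ_top (by omega), ih]
    rcases Nat.eq_zero_or_pos m with rfl | hm
    · norm_num
    · have : ((m + 1 - 1 : ℕ) : ℝ) = (m : ℝ) := by
        push_cast [Nat.add_sub_cancel]; ring
      rw [this]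
      have hm1 : (1:ℝ) ≤ (m:ℝ) := by exact_mod_cast hm
      push_cast
      ring

lemma mg_zero (q : ℝ) (hq1 : q < 1) (n : ℕ) :
    mg q (n+2) 0 = 1 + q * ((n:ℝ) + 1) := by
  have hp : (1:ℝ) - q ≠ 0 := sub_ne_zero.mpr (ne_of_gt (by linarith))
  unfold mg
  rw [show n+2 = (n+1)+1 from rfl, Finset.sum_Icc_succ_top (by omega)]
  have htop : mwt q (n+1+1) (n+1+1) * gTest q 0 (n+1+1) = 1 := by
    simp only [mwt, gTest, eq_self_iff_true, if_true]
    rw [← mul_pow]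
    have : (1 - q) * ((1 - 0)/(1 - q)) = 1 := by field_simp; norm_num
    rw [this, one_pow]
  have hlow : ∀ k ∈ Finset.Icc 1 (n+1), mwt q (n+1+1) k * gTest q 0 k = q := by
    intro k hk
    rw [Finset.mem_Icc] at hk
    have hkne : k ≠ n+1+1 := by omega
    simp only [mwt, gTest, if_neg hkne]
    rw [mul_assoc, ← mul_pow]
    have : (1 - q) * ((1 - 0)/(1 - q)) = 1 := by field_simp; norm_num
    rw [this, one_pow, mul_one]
  rw [Finset.sum_congr rfl hlow, htop, Finset.sum_const, Nat.card_Icc]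
  simp only [nsmul_eq_mul]
  push_cast
  ring

lemma mgLog_zero (q : ℝ) (hq1 : q < 1) (n : ℕ) :
    mgLog q (n+2) 0 =
      (1/2) * ((n:ℝ)+1) * (q * ((n:ℝ)+2) + 2*(1-q)) * Real.log (1/(1-q)) := by
  have hp : (1:ℝ) - q ≠ 0 := sub_ne_zero.mpr (ne_of_gt (by linarith))
  have hgl : ∀ k : ℕ, Real.log (gTest q 0 k) = ((k-1 : ℕ) : ℝ) * Real.log (1/(1-q)) := by
    intro k
    simp only [gTest, sub_zero]
    rw [Real.log_pow]
  unfold mgLog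
  rw [show n+2 = (n+1)+1 from rfl, Finset.sum_Icc_succ_top (by omega)]
  have htop : mwt q (n+1+1) (n+1+1) * gTest q 0 (n+1+1) = 1 := by
    simp only [mwt, gTest, eq_self_iff_true, if_true]
    rw [← mul_pow]
    have : (1 - q) * ((1 - 0)/(1 - q)) = 1 := by field_simp; norm_num
    rw [this, one_pow]
  have hlow : ∀ k ∈ Finset.Icc 1 (n+1),
      mwt q (n+1+1) k * gTest q 0 k * Real.log (gTest q 0 k)
        = ((k-1 : ℕ) : ℝ) * (q * Real.log (1/(1-q))) := by
    intro k hk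
    rw [Finset.mem_Icc] at hk
    have hkne : k ≠ n+1+1 := by omega
    have hml : mwt q (n+1+1) k * gTest q 0 k = q := by
      simp only [mwt, gTest, if_neg hkne]
      rw [mul_assoc, ← mul_pow]
      have : (1 - q) * ((1 - 0)/(1 - q)) = 1 := by field_simp; norm_num
      rw [this, one_pow, mul_one]
    rw [hml, hgl]
    ring
  rw [Finset.sum_congr rfl hlow, htop, one_mul, hgl, ← Finset.sum_mul, gauss]
  have : ((n+1+1 : ℕ) - 1 : ℕ) = n+1 := by omega
  rw [this]
  push_cast
  ring

/-- **Test-function computation for the log-Sobolev lower bound.**  As `ε → 0⁺`,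
`m(g) → 1 + q(L-1)` and `m(g log g) → ½ (L-1)(qL + 2p) log(1/p)`; consequently there is
a constant `c = c(q) > 0`, independent of `L`, such that the limiting entropy is bounded
below by `c L²`. -/
theorem logSobolev_test_function (q : ℝ) (hq : 0 < q) (hq1 : q < 1) :
    (∀ L : ℕ, 2 ≤ L →
      Tendsto (fun ε : ℝ => mg q L ε) (𝓝[>] 0) (𝓝 (1 + q * ((L : ℝ) - 1))) ∧
      Tendsto (fun ε : ℝ => mgLog q L ε) (𝓝[>] 0)
        (𝓝 ((1 / 2) * ((L : ℝ) - 1) * (q * L + 2 * (1 - q)) * Real.log (1 / (1 - q))))) ∧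
    (∃ c : ℝ, 0 < c ∧ ∀ L : ℕ, 2 ≤ L →
      c * (L : ℝ) ^ 2 ≤ Filter.liminf (fun ε : ℝ => entm q L ε) (𝓝[>] (0 : ℝ))) := by
  have hp0 : (0:ℝ) < 1 - q := by linarith
  have hp : (1:ℝ) - q ≠ 0 := ne_of_gt hp0
  have hgk : ∀ k : ℕ, ContinuousAt (fun ε : ℝ => gTest q ε k) 0 := by
    intro k
    have : Continuous (fun ε : ℝ => ((1 - ε) / (1 - q)) ^ (k-1)) :=
      ((continuous_const.sub continuous_id).div_const _).pow _
    exact this.continuousAt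
  have hgne : ∀ k : ℕ, gTest q 0 k ≠ 0 := by
    intro k
    apply pow_ne_zero
    rw [sub_zero]
    exact div_ne_zero one_ne_zero hp
  have hmgC : ∀ L : ℕ, ContinuousAt (fun ε : ℝ => mg q L ε) 0 := by
    intro L
    exact tendsto_finset_sum _ (fun k _ => (continuousAt_const.mul (hgk k)))
  have hmgLogC : ∀ L : ℕ, ContinuousAt (fun ε : ℝ => mgLog q L ε) 0 := by
    intro L
    exact tendsto_finset_sum _
      (fun k _ => (continuousAt_const.mul (hgk k)).mul ((hgk k).log (hgne k)))
  have hmain : ∀ L : ℕ, 2 ≤ L →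
      Tendsto (fun ε : ℝ => mg q L ε) (𝓝[>] 0) (𝓝 (1 + q * ((L : ℝ) - 1))) ∧
      Tendsto (fun ε : ℝ => mgLog q L ε) (𝓝[>] 0)
        (𝓝 ((1 / 2) * ((L : ℝ) - 1) * (q * L + 2 * (1 - q)) * Real.log (1 / (1 - q)))) := by
    intro L hL
    obtain ⟨n, rfl⟩ : ∃ n, L = n + 2 := ⟨L - 2, by omega⟩
    constructor
    · have h : Tendsto (fun ε : ℝ => mg q (n+2) ε) (𝓝[>] 0) (𝓝 (mg q (n+2) 0)) :=
        (hmgC (n+2)).tendsto.mono_left nhdsWithin_le_nhds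
      rw [mg_zero q hq1 n] at h
      have heq : (1:ℝ) + q * (((n+2:ℕ) : ℝ) - 1) = 1 + q * ((n:ℝ) + 1) := by
        push_cast; ring
      rw [heq]
      exact h
    · have h : Tendsto (fun ε : ℝ => mgLog q (n+2) ε) (𝓝[>] 0) (𝓝 (mgLog q (n+2) 0)) :=
        (hmgLogC (n+2)).tendsto.mono_left nhdsWithin_le_nhds
      rw [mgLog_zero q hq1 n] at h
      have heq : (1/2 : ℝ) * (((n+2:ℕ) : ℝ) - 1) * (q * ((n+2:ℕ) : ℝ) + 2 * (1 - q)) *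
          Real.log (1 / (1 - q))
          = (1/2) * ((n:ℝ)+1) * (q * ((n:ℝ)+2) + 2*(1-q)) * Real.log (1/(1-q)) := by
        push_cast; ring
      rw [heq]
      exact h
  refine ⟨hmain, ?_⟩
  set t := Real.log (1/(1-q)) with hT
  have ht_eq : t = -Real.log (1-q) := by rw [hT, one_div, Real.log_inv]
  have htq : q < t := by
    have h1 : Real.log (1-q) < (1-q) - 1 :=
      Real.log_lt_sub_one_of_pos hp0 (by intro h; rw [sub_eq_self] at h; exact hq.ne' (by linarith))
    rw [ht_eq]; linarith
  have ht2' : 2*q ≤ t*(2-q) := by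
    have h2q : (0:ℝ) < 2 - q := by linarith
    have h1z : (1:ℝ) ≤ 1/(1-q) := by rw [le_div_iff₀ hp0]; linarith
    have hpl := pade_log (1/(1-q)) h1z
    have hz0 : (0:ℝ) < 1/(1-q) := div_pos one_pos hp0
    have heq : 2*((1/(1-q))-1)/((1/(1-q))+1) = 2*q/(2-q) := by
      rw [div_eq_div_iff (by linarith : (0:ℝ) < 1/(1-q)+1).ne' h2q.ne']
      field_simp
      ring
    rw [heq] at hpl
    rw [div_le_iff₀ h2q] at hpl
    linarith
  refine ⟨q*(t-q)/8, div_pos (mul_pos hq (by linarith)) (by norm_num), ?_⟩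
  intro L hL
  have hL2 : (2:ℝ) ≤ (L:ℝ) := by exact_mod_cast hL
  obtain ⟨hA, hB⟩ := hmain L hL
  have hM0 : (0:ℝ) < 1 + q*((L:ℝ)-1) := by nlinarith
  have hEnt : Tendsto (fun ε : ℝ => entm q L ε) (𝓝[>] 0)
      (𝓝 ((1/2) * ((L:ℝ)-1) * (q*(L:ℝ)+2*(1-q)) * t
            - (1 + q*((L:ℝ)-1)) * Real.log (1 + q*((L:ℝ)-1)))) :=
    hB.sub (hA.mul (hA.log (ne_of_gt hM0)))
  rw [hEnt.liminf_eq]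
  set x := q*((L:ℝ)-1) with hx
  have hx_q : q ≤ x := by rw [hx]; nlinarith
  have hx0 : (0:ℝ) < x := lt_of_lt_of_le hq hx_q
  have hxL : q*(L:ℝ) ≤ 2*x := by rw [hx]; nlinarith
  have hlog := xlogx_le x hx0.le
  have hA2 : q^2*(L:ℝ)^2 ≤ 4*x^2 := by nlinarith [mul_pos hq (by linarith : (0:ℝ) < (L:ℝ))]
  have hB2 : (0:ℝ) ≤ (t - q)*(4*x^2 - q^2*(L:ℝ)^2) :=
    mul_nonneg (by linarith) (by linarith)
  have hC2 : (0:ℝ) ≤ x*(t*(2-q) - 2*q) := mul_nonneg hx0.le (by linarith)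
  rw [← mul_le_mul_iff_right₀ hq]
  have hkey : q * ((1/2) * ((L:ℝ)-1) * (q*(L:ℝ)+2*(1-q)) * t
      - (1 + x) * Real.log (1 + x))
      = (1/2)*x*(x+2-q)*t - q*((1 + x) * Real.log (1 + x)) := by
    rw [hx]; ring
  rw [hkey]
  have hGq : q * ((1+x) * Real.log (1+x)) ≤ q * (x + x^2/2) :=
    mul_le_mul_of_nonneg_left hlog hq.le
  nlinarith [hB2, hC2, hGq]
end
end

section
/- In the proof of the spectral gap lower bound for the East model via the bisection-constrained method: for Λ = Λ₁ ∪ Λ₂ with overlap I = Λ₁ ∩ Λ₂ and blocks B₁ = Λ∖Λ₂, B₂ = Λ₂, the constrained term satisfies π_Λ(c₁·Var_{B₁}(f)) ≤ gap(L_{Λ₁})^{-1} · π_Λ(Σ_{x∈Λ₁} c_x^Λ Var_x(f)), where c₁(σ) is the indicator that σ has at least one zero in I. -/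
noncomputable section
open Finset

/-- Patch a configuration on the finite set `S` of sites. -/
def patch (S : Finset ℤ) (τ : S → Bool) (η : ℤ → Bool) : ℤ → Bool :=
  fun x => if h : x ∈ S then τ ⟨x, h⟩ else η x

/-- Weight of a local configuration under the product Bernoulli(1-q) measure
(`true` = occupied, with probability `1-q`; `false` = empty, with probability `q`). -/
def wt (q : ℝ) (S : Finset ℤ) (τ : S → Bool) : ℝ :=
  ∏ x : S, (if τ x then 1 - q else q)

/-- Conditional mean over the sites in `S`, the configuration outside `S` being `η`. -/
def condMean (q : ℝ) (S : Finset ℤ) (f : (ℤ → Bool) → ℝ) (η : ℤ → Bool) : ℝ :=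
  ∑ τ : S → Bool, wt q S τ * f (patch S τ η)

/-- Conditional variance over the sites in `S`. -/
def condVar (q : ℝ) (S : Finset ℤ) (f : (ℤ → Bool) → ℝ) (η : ℤ → Bool) : ℝ :=
  condMean q S (fun σ => (f σ - condMean q S f η) ^ 2) η

/-- East constraint on `[a,b]` with a frozen zero at `b+1`. -/
def cE (b x : ℤ) (η : ℤ → Bool) : ℝ :=
  if x = b then 1 else if η (x + 1) then 0 else 1

def allOnes : ℤ → Bool := fun _ => true

/-- Mean w.r.t. the product Bernoulli(1-q) measure on `[a,b]`. -/
def meanI (q : ℝ) (a b : ℤ) (f : (ℤ → Bool) → ℝ) : ℝ :=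
  condMean q (Finset.Icc a b) f allOnes

/-- Variance w.r.t. the product Bernoulli(1-q) measure on `[a,b]`. -/
def varI (q : ℝ) (a b : ℤ) (f : (ℤ → Bool) → ℝ) : ℝ :=
  condVar q (Finset.Icc a b) f allOnes

/-- Dirichlet form of the East model on `[a,b]` with frozen zero at `b+1`. -/
def dirI (q : ℝ) (a b : ℤ) (f : (ℤ → Bool) → ℝ) : ℝ :=
  meanI q a b (fun σ => ∑ x ∈ Finset.Icc a b, cE b x σ * condVar q {x} f σ)

/-- Spectral gap of the East model on `[a,b]` with frozen zero at `b+1`. -/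
def gapI (q : ℝ) (a b : ℤ) : ℝ :=
  sInf {r : ℝ | ∃ f : (ℤ → Bool) → ℝ, varI q a b f ≠ 0 ∧ r = dirI q a b f / varI q a b f}

section Helpers

variable {q : ℝ} {S T : Finset ℤ} {f g : (ℤ → Bool) → ℝ} {η ζ : ℤ → Bool}

lemma patch_mem {x : ℤ} (h : x ∈ S) (τ : S → Bool) (η : ℤ → Bool) :
    patch S τ η x = τ ⟨x, h⟩ := by simp [patch, h]

lemma patch_not_mem {x : ℤ} (h : x ∉ S) (τ : S → Bool) (η : ℤ → Bool) :
    patch S τ η x = η x := by simp [patch, h]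

lemma wt_nonneg (hq0 : 0 ≤ q) (hq1 : q ≤ 1) (τ : S → Bool) : 0 ≤ wt q S τ := by
  unfold wt
  apply Finset.prod_nonneg
  intro x _
  split <;> linarith

lemma wt_eq_prod (τ : S → Bool) (η : ℤ → Bool) :
    wt q S τ = ∏ x ∈ S, (if patch S τ η x then 1 - q else q) := by
  unfold wt
  rw [← Finset.prod_attach S (fun x => if patch S τ η x then 1 - q else q)]
  rw [Finset.univ_eq_attach]
  apply Finset.prod_congr rfl
  intro x _
  rw [patch_mem x.2]

lemma sum_wt : ∑ τ : S → Bool, wt q S τ = 1 := by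
  unfold wt
  rw [show (Finset.univ : Finset (↥S → Bool)) = Fintype.piFinset (fun _ => (Finset.univ : Finset Bool)) from (Fintype.piFinset_univ).symm]
  rw [← Finset.prod_univ_sum (t := fun _ : ↥S => (Finset.univ : Finset Bool)) (f := fun _ b => if b = true then (1:ℝ) - q else q)]
  simp

end Helpers
section Helpers2

variable {q : ℝ} {S T : Finset ℤ} {f g : (ℤ → Bool) → ℝ} {η ζ : ℤ → Bool}

lemma condMean_congr_patch (h : ∀ τ : S → Bool, f (patch S τ η) = g (patch S τ ζ)) :
    condMean q S f η = condMean q S g ζ := by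
  unfold condMean
  exact Finset.sum_congr rfl fun τ _ => by rw [h τ]

lemma condMean_const (c : ℝ) : condMean q S (fun _ => c) η = c := by
  unfold condMean
  rw [← Finset.sum_mul, sum_wt, one_mul]

lemma condMean_sum {ι : Type*} (A : Finset ι) (F : ι → (ℤ → Bool) → ℝ) :
    condMean q S (fun σ => ∑ i ∈ A, F i σ) η = ∑ i ∈ A, condMean q S (F i) η := by
  unfold condMean
  simp_rw [Finset.mul_sum]
  rw [Finset.sum_comm]

lemma condMean_add : condMean q S (fun σ => f σ + g σ) η
    = condMean q S f η + condMean q S g η := by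
  unfold condMean; rw [← Finset.sum_add_distrib]
  exact Finset.sum_congr rfl fun τ _ => by ring

lemma condMean_const_mul (c : ℝ) :
    condMean q S (fun σ => c * f σ) η = c * condMean q S f η := by
  unfold condMean; rw [Finset.mul_sum]
  exact Finset.sum_congr rfl fun τ _ => by ring

lemma condMean_nonneg (hq0 : 0 ≤ q) (hq1 : q ≤ 1) (hf : ∀ σ, 0 ≤ f σ) :
    0 ≤ condMean q S f η :=
  Finset.sum_nonneg fun τ _ => mul_nonneg (wt_nonneg hq0 hq1 τ) (hf _)

lemma condMean_mono (hq0 : 0 ≤ q) (hq1 : q ≤ 1)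
    (hfg : ∀ τ : S → Bool, f (patch S τ η) ≤ g (patch S τ η)) :
    condMean q S f η ≤ condMean q S g η :=
  Finset.sum_le_sum fun τ _ => mul_le_mul_of_nonneg_left (hfg τ) (wt_nonneg hq0 hq1 τ)

/-- `f` does not depend on the coordinates in `S`. -/
def Indep (S : Finset ℤ) (f : (ℤ → Bool) → ℝ) : Prop :=
  ∀ (τ : S → Bool) (η : ℤ → Bool), f (patch S τ η) = f η

lemma condMean_indep (hf : Indep S f) : condMean q S f η = f η := by
  unfold condMean
  calc ∑ τ : S → Bool, wt q S τ * f (patch S τ η)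
      = ∑ τ : S → Bool, wt q S τ * f η := Finset.sum_congr rfl fun τ _ => by rw [hf]
    _ = f η := by rw [← Finset.sum_mul, sum_wt, one_mul]

lemma patch_congr_outside (h : ∀ x ∉ S, η x = ζ x) (τ : S → Bool) :
    patch S τ η = patch S τ ζ := by
  funext x
  by_cases hx : x ∈ S
  · rw [patch_mem hx, patch_mem hx]
  · rw [patch_not_mem hx, patch_not_mem hx, h x hx]

lemma condMean_congr_outside (h : ∀ x ∉ S, η x = ζ x) :
    condMean q S f η = condMean q S f ζ :=
  condMean_congr_patch fun τ => by rw [patch_congr_outside h]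

lemma condVar_congr_outside (h : ∀ x ∉ S, η x = ζ x) :
    condVar q S f η = condVar q S f ζ := by
  unfold condVar
  rw [condMean_congr_outside (f := f) h]
  exact condMean_congr_outside h

lemma condVar_nonneg (hq0 : 0 ≤ q) (hq1 : q ≤ 1) : 0 ≤ condVar q S f η :=
  condMean_nonneg hq0 hq1 fun σ => sq_nonneg _

end Helpers2
section Helpers3

variable {q : ℝ} {S T : Finset ℤ} {f g : (ℤ → Bool) → ℝ} {η ζ : ℤ → Bool}

/-- Glue two local configurations on disjoint sets. -/
def glue (S T : Finset ℤ) (τ₁ : S → Bool) (τ₂ : T → Bool) : ((S ∪ T : Finset ℤ)) → Bool :=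
  fun x => if h : (x : ℤ) ∈ S then τ₁ ⟨x, h⟩
    else τ₂ ⟨x, by
      have := x.2
      rw [Finset.mem_union] at this
      tauto⟩

lemma patch_glue (hd : Disjoint S T) (τ₁ : S → Bool) (τ₂ : T → Bool) :
    patch (S ∪ T) (glue S T τ₁ τ₂) η = patch T τ₂ (patch S τ₁ η) := by
  funext x
  by_cases hxS : x ∈ S
  · have hxT : x ∉ T := Finset.disjoint_left.mp hd hxS
    rw [patch_mem (Finset.mem_union_left _ hxS), patch_not_mem hxT, patch_mem hxS]
    simp [glue, hxS]
  · by_cases hxT : x ∈ T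
    · rw [patch_mem (Finset.mem_union_right _ hxT), patch_mem hxT]
      simp [glue, hxS]
    · rw [patch_not_mem (by simp [Finset.mem_union, hxS, hxT]),
        patch_not_mem hxT, patch_not_mem hxS]

lemma wt_glue (hd : Disjoint S T) (τ₁ : S → Bool) (τ₂ : T → Bool) :
    wt q (S ∪ T) (glue S T τ₁ τ₂) = wt q S τ₁ * wt q T τ₂ := by
  rw [wt_eq_prod (η := allOnes), Finset.prod_union hd,
    wt_eq_prod (τ := τ₁) (η := allOnes), wt_eq_prod (τ := τ₂) (η := allOnes)]
  congr 1
  · apply Finset.prod_congr rfl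
    intro x hx
    rw [patch_mem (Finset.mem_union_left _ hx), patch_mem hx]
    simp [glue, hx]
  · apply Finset.prod_congr rfl
    intro x hx
    have hxS : x ∉ S := Finset.disjoint_right.mp hd hx
    rw [patch_mem (Finset.mem_union_right _ hx), patch_mem hx]
    simp [glue, hxS]

noncomputable def glueEquiv (S T : Finset ℤ) (hd : Disjoint S T) :
    ((S → Bool) × (T → Bool)) ≃ ((S ∪ T : Finset ℤ) → Bool) where
  toFun p := glue S T p.1 p.2
  invFun τ := (fun x => τ ⟨x, Finset.mem_union_left _ x.2⟩,
               fun x => τ ⟨x, Finset.mem_union_right _ x.2⟩)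
  left_inv p := by
    ext x
    · simp [glue, x.2]
    · have hxS : (x : ℤ) ∉ S := Finset.disjoint_right.mp hd x.2
      simp [glue, hxS]
  right_inv τ := by
    funext x
    by_cases hxS : (x : ℤ) ∈ S <;> simp [glue, hxS]

lemma condMean_union (hd : Disjoint S T) :
    condMean q (S ∪ T) f η = condMean q S (fun ζ => condMean q T f ζ) η := by
  unfold condMean
  rw [← Equiv.sum_comp (glueEquiv S T hd)
    (fun τ => wt q (S ∪ T) τ * f (patch (S ∪ T) τ η))]
  rw [Fintype.sum_prod_type]
  apply Finset.sum_congr rfl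
  intro τ₁ _
  rw [Finset.mul_sum]
  apply Finset.sum_congr rfl
  intro τ₂ _
  show wt q (S ∪ T) (glue S T τ₁ τ₂) * f (patch (S ∪ T) (glue S T τ₁ τ₂) η) = _
  rw [wt_glue hd, patch_glue hd]
  ring

end Helpers3
section Helpers4

variable {q : ℝ} {S S' T : Finset ℤ} {f g : (ℤ → Bool) → ℝ} {η ζ σ : ℤ → Bool}

/-- Replace the configuration outside `S` by `η`. -/
def override (S : Finset ℤ) (η : ℤ → Bool) (σ : ℤ → Bool) : ℤ → Bool :=
  fun x => if x ∈ S then σ x else η x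

lemma override_patch (h : S' ⊆ S) (τ : S' → Bool) :
    override S η (patch S' τ σ) = patch S' τ (override S η σ) := by
  funext x
  by_cases hx : x ∈ S'
  · rw [patch_mem hx]
    have hxS : x ∈ S := h hx
    simp [override, hxS, patch_mem hx]
  · rw [patch_not_mem hx]
    by_cases hxS : x ∈ S <;> simp [override, hxS, patch_not_mem hx]

lemma condMean_override (h : S' ⊆ S) :
    condMean q S' (fun ρ => f (override S η ρ)) σ = condMean q S' f (override S η σ) :=
  condMean_congr_patch fun τ => by rw [override_patch h]

lemma condVar_override (h : S' ⊆ S) :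
    condVar q S' (fun ρ => f (override S η ρ)) σ = condVar q S' f (override S η σ) := by
  unfold condVar
  rw [condMean_override (f := f) h]
  exact condMean_override (f := fun ρ => (f ρ - condMean q S' f (override S η σ)) ^ 2) h

lemma override_patch_self (τ : S → Bool) : override S η (patch S τ ζ) = patch S τ η := by
  funext x
  by_cases hx : x ∈ S
  · simp [override, hx, patch_mem hx]
  · simp [override, hx, patch_not_mem hx]

lemma override_outside (x : ℤ) (hx : x ∉ S) : override S η σ x = η x := by
  simp [override, hx]

/-- Transfer: averaging `f ∘ override S η` over `S` from any boundary equals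
averaging `f` over `S` with boundary `η`. -/
lemma condMean_override_self :
    condMean q S (fun ρ => f (override S η ρ)) ζ = condMean q S f η := by
  rw [condMean_override (le_refl S)]
  exact condMean_congr_outside fun x hx => override_outside x hx

lemma condVar_override_self :
    condVar q S (fun ρ => f (override S η ρ)) ζ = condVar q S f η := by
  rw [condVar_override (le_refl S)]
  exact condVar_congr_outside fun x hx => override_outside x hx

/-- `f ∘ override S η` is independent of the coordinates outside `S`. -/
lemma indep_override_of_disjoint (hd : Disjoint S T) :
    Indep T (fun ρ => f (override S η ρ)) := by
  intro τ ρ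
  have : override S η (patch T τ ρ) = override S η ρ := by
    funext x
    show (if x ∈ S then patch T τ ρ x else η x) = (if x ∈ S then ρ x else η x)
    by_cases hx : x ∈ S
    · have hxT : x ∉ T := Finset.disjoint_left.mp hd hx
      rw [if_pos hx, if_pos hx, patch_not_mem hxT]
    · rw [if_neg hx, if_neg hx]
  show f (override S η (patch T τ ρ)) = f (override S η ρ)
  rw [this]

/-- Variance minimizes the mean square deviation. -/
lemma condVar_le_sq (c : ℝ) :
    condVar q S f η ≤ condMean q S (fun ρ => (f ρ - c) ^ 2) η := by
  set m := condMean q S f η with hm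
  have key : ∀ ρ : ℤ → Bool,
      (f ρ - c) ^ 2 = (f ρ - m) ^ 2 + ((2 * (m - c)) * f ρ + ((m - c) ^ 2 - 2 * (m - c) * m)) := by
    intro ρ; ring
  calc condVar q S f η = condVar q S f η + ((2 * (m - c)) * m + ((m - c) ^ 2 - 2 * (m - c) * m)) - (m - c) ^ 2 := by ring
    _ ≤ condVar q S f η + ((2 * (m - c)) * m + ((m - c) ^ 2 - 2 * (m - c) * m)) := by
        have := sq_nonneg (m - c); linarith
    _ = condMean q S (fun ρ => (f ρ - c) ^ 2) η := by
        unfold condVar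
        rw [← hm]
        conv_rhs => rw [show (fun ρ => (f ρ - c) ^ 2) = fun ρ => (f ρ - m) ^ 2 + ((2 * (m - c)) * f ρ + ((m - c) ^ 2 - 2 * (m - c) * m)) from funext key]
        rw [condMean_add, condMean_add, condMean_const_mul, condMean_const, ← hm]

/-- A function independent of `S` has zero conditional variance over `S`. -/
lemma condVar_indep (hf : Indep S f) : condVar q S f η = 0 := by
  unfold condVar
  rw [condMean_indep hf]
  have : condMean q S (fun σ => (f σ - f η) ^ 2) η
      = condMean q S (fun _ => (0:ℝ)) η :=
    condMean_congr_patch fun τ => by rw [hf τ η]; ring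
  rw [this, condMean_const]

/-- Projection property: `E_{S∪T}[E_S g] = E_{S∪T}[g]`. -/
lemma condMean_proj (hd : Disjoint S T) :
    condMean q (S ∪ T) (fun σ => condMean q S g σ) η = condMean q (S ∪ T) g η := by
  rw [Finset.union_comm, condMean_union hd.symm, condMean_union hd.symm]
  apply condMean_congr_patch
  intro τ
  set ζ' := patch T τ η
  have : ∀ ρ : S → Bool, condMean q S g (patch S ρ ζ') = condMean q S g ζ' := by
    intro ρ
    exact condMean_congr_outside fun x hx => patch_not_mem hx ρ ζ'
  calc condMean q S (fun σ => condMean q S g σ) ζ'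
      = condMean q S (fun _ => condMean q S g ζ') ζ' := condMean_congr_patch fun ρ => this ρ
    _ = condMean q S g ζ' := condMean_const _

/-- Law of total variance (inequality part): `E_{S∪T}[Var_S f] ≤ Var_{S∪T} f`. -/
lemma total_variance (hq0 : 0 ≤ q) (hq1 : q ≤ 1) (hd : Disjoint S T) :
    condMean q (S ∪ T) (fun σ => condVar q S f σ) η ≤ condVar q (S ∪ T) f η := by
  set c := condMean q (S ∪ T) f η with hc
  have step1 : condMean q (S ∪ T) (fun σ => condVar q S f σ) η
      ≤ condMean q (S ∪ T) (fun σ => condMean q S (fun ρ => (f ρ - c) ^ 2) σ) η :=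
    condMean_mono hq0 hq1 fun τ => condVar_le_sq c
  have step2 : condMean q (S ∪ T) (fun σ => condMean q S (fun ρ => (f ρ - c) ^ 2) σ) η
      = condMean q (S ∪ T) (fun ρ => (f ρ - c) ^ 2) η := condMean_proj hd
  have step3 : condVar q (S ∪ T) f η = condMean q (S ∪ T) (fun ρ => (f ρ - c) ^ 2) η := rfl
  linarith

end Helpers4
section Helpers5

variable {q : ℝ} {S T : Finset ℤ} {f g : (ℤ → Bool) → ℝ} {η ζ σ : ℤ → Bool}

lemma condMean_empty : condMean q (∅ : Finset ℤ) f η = f η := by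
  unfold condMean
  have key : ∀ τ : ((∅ : Finset ℤ) → Bool), wt q ∅ τ * f (patch ∅ τ η) = f η := by
    intro τ
    have h1 : wt q (∅ : Finset ℤ) τ = 1 := by unfold wt; simp
    have h2 : patch (∅ : Finset ℤ) τ η = η := by
      funext x; exact patch_not_mem (by simp) _ _
    rw [h1, h2, one_mul]
  calc ∑ τ : ((∅ : Finset ℤ) → Bool), wt q ∅ τ * f (patch ∅ τ η)
      = ∑ _τ : ((∅ : Finset ℤ) → Bool), f η := Finset.sum_congr rfl fun τ _ => key τ
    _ = f η := by simp

lemma condVar_empty : condVar q (∅ : Finset ℤ) f η = 0 := by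
  unfold condVar
  rw [condMean_empty, condMean_empty]
  ring

lemma condMean_union_indep (hd : Disjoint S T) (hf : Indep T f) :
    condMean q (S ∪ T) f η = condMean q S f η := by
  rw [condMean_union hd]
  exact condMean_congr_patch fun τ => condMean_indep hf

lemma condVar_union_indep (hd : Disjoint S T) (hf : Indep T f) :
    condVar q (S ∪ T) f η = condVar q S f η := by
  unfold condVar
  rw [condMean_union_indep hd hf]
  exact condMean_union_indep hd fun τ ρ => by
    show (f (patch T τ ρ) - _) ^ 2 = _
    rw [hf τ ρ]

lemma cE_nonneg (b x : ℤ) (σ : ℤ → Bool) : 0 ≤ cE b x σ := by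
  unfold cE; split <;> [norm_num; split <;> norm_num]

lemma cE_le_one (b x : ℤ) (σ : ℤ → Bool) : cE b x σ ≤ 1 := by
  unfold cE; split <;> [norm_num; split <;> norm_num]

lemma varI_nonneg (hq0 : 0 ≤ q) (hq1 : q ≤ 1) (a b : ℤ) : 0 ≤ varI q a b f := by
  unfold varI
  exact condVar_nonneg hq0 hq1

lemma dirI_nonneg (hq0 : 0 ≤ q) (hq1 : q ≤ 1) (a b : ℤ) : 0 ≤ dirI q a b f := by
  unfold dirI meanI
  exact condMean_nonneg hq0 hq1 fun σ => Finset.sum_nonneg fun x _ =>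
    mul_nonneg (cE_nonneg b x σ) (condVar_nonneg hq0 hq1)

-- Monotonicity of the spectral gap + Poincaré inequality, on `[a,b'] ⊆ [a,m₁]`.
set_option maxHeartbeats 1000000 in
lemma gap_mono_poincare (hq0 : 0 ≤ q) (hq1 : q ≤ 1) {a b' m₁ : ℤ}
    (hab : a ≤ b') (hbm : b' ≤ m₁) (f : (ℤ → Bool) → ℝ) :
    gapI q a m₁ * varI q a b' f ≤ dirI q a b' f := by
  by_cases hv : varI q a b' f = 0
  · rw [hv, mul_zero]; exact dirI_nonneg hq0 hq1 _ _
  · set S := Finset.Icc a b' with hS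
    set T := Finset.Icc (b' + 1) m₁ with hT
    have hd : Disjoint S T := by
      rw [Finset.disjoint_left]; intro x hx hx'
      rw [hS, Finset.mem_Icc] at hx; rw [hT, Finset.mem_Icc] at hx'; omega
    have hST : S ∪ T = Finset.Icc a m₁ := by
      ext x; simp only [Finset.mem_union, hS, hT, Finset.mem_Icc]; omega
    set G := fun ρ : ℤ → Bool => f (override S allOnes ρ) with hG
    have hGindep : Indep T G := indep_override_of_disjoint hd
    -- (i) variances agree
    have hvar : varI q a m₁ G = varI q a b' f := by
      unfold varI
      rw [← hST, condVar_union_indep hd hGindep]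
      exact condVar_override_self
    -- (ii) Dirichlet forms compare
    have hdir : dirI q a m₁ G ≤ dirI q a b' f := by
      unfold dirI meanI
      have hineq : ∀ τ : (Finset.Icc a m₁) → Bool,
          (fun σ => ∑ x ∈ Finset.Icc a m₁, cE m₁ x σ * condVar q {x} G σ)
            (patch (Finset.Icc a m₁) τ allOnes)
          ≤ (fun σ => (fun σ' => ∑ x ∈ S, cE b' x σ' * condVar q {x} f σ')
              (override S allOnes σ)) (patch (Finset.Icc a m₁) τ allOnes) := by
        intro τ
        set σ := patch (Finset.Icc a m₁) τ allOnes
        show ∑ x ∈ Finset.Icc a m₁, cE m₁ x σ * condVar q {x} G σ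
          ≤ ∑ x ∈ S, cE b' x (override S allOnes σ) * condVar q {x} f (override S allOnes σ)
        rw [← hST, Finset.sum_union hd]
        have hTzero : ∑ x ∈ T, cE m₁ x σ * condVar q {x} G σ = 0 := by
          apply Finset.sum_eq_zero
          intro x hx
          have hxS : Disjoint S ({x} : Finset ℤ) := by
            rw [Finset.disjoint_right]
            intro z hz
            rw [Finset.mem_singleton] at hz
            subst hz
            exact Finset.disjoint_left.mp hd.symm hx
          rw [condVar_indep (indep_override_of_disjoint hxS), mul_zero]
        rw [hTzero, add_zero]
        apply Finset.sum_le_sum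
        intro x hx
        have hxmem : x ∈ Finset.Icc a b' := hx
        rw [Finset.mem_Icc] at hxmem
        have hvarx : condVar q {x} G σ = condVar q {x} f (override S allOnes σ) := by
          apply condVar_override
          rw [hS]; intro z hz; rw [Finset.mem_singleton] at hz; subst hz; exact hx
        rw [hvarx]
        apply mul_le_mul_of_nonneg_right _ (condVar_nonneg hq0 hq1)
        by_cases hxb : x = b'
        · calc cE m₁ x σ ≤ 1 := cE_le_one _ _ _
            _ = cE b' x (override S allOnes σ) := by rw [hxb]; unfold cE; simp
        · have hxm : x ≠ m₁ := by omega
          have hx1 : x + 1 ∈ S := by rw [hS, Finset.mem_Icc]; omega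
          unfold cE
          rw [if_neg hxm, if_neg hxb]
          have : override S allOnes σ (x + 1) = σ (x + 1) := by
            show (if x + 1 ∈ S then σ (x+1) else allOnes (x+1)) = σ (x + 1)
            rw [if_pos hx1]
          rw [this]
      calc condMean q (Finset.Icc a m₁)
            (fun σ => ∑ x ∈ Finset.Icc a m₁, cE m₁ x σ * condVar q {x} G σ) allOnes
          ≤ condMean q (Finset.Icc a m₁)
            (fun σ => (fun σ' => ∑ x ∈ S, cE b' x σ' * condVar q {x} f σ')
              (override S allOnes σ)) allOnes := condMean_mono hq0 hq1 hineq
        _ = condMean q S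
            (fun σ => (fun σ' => ∑ x ∈ S, cE b' x σ' * condVar q {x} f σ')
              (override S allOnes σ)) allOnes := by
              rw [← hST]
              exact condMean_union_indep hd (indep_override_of_disjoint
                (f := fun σ' => ∑ x ∈ S, cE b' x σ' * condVar q {x} f σ') (η := allOnes) hd)
        _ = condMean q S (fun σ' => ∑ x ∈ S, cE b' x σ' * condVar q {x} f σ') allOnes :=
              condMean_override_self
                (f := fun σ' => ∑ x ∈ S, cE b' x σ' * condVar q {x} f σ') (η := allOnes)
        _ = dirI q a b' f := rfl
    -- conclude via the definition of the gap
    have hvpos : 0 < varI q a b' f := lt_of_le_of_ne (varI_nonneg hq0 hq1 _ _) (Ne.symm hv)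
    have hmem : dirI q a m₁ G / varI q a m₁ G ∈
        {r : ℝ | ∃ f : (ℤ → Bool) → ℝ, varI q a m₁ f ≠ 0 ∧ r = dirI q a m₁ f / varI q a m₁ f} :=
      ⟨G, by rw [hvar]; exact hv, rfl⟩
    have hbdd : BddBelow {r : ℝ | ∃ f : (ℤ → Bool) → ℝ,
        varI q a m₁ f ≠ 0 ∧ r = dirI q a m₁ f / varI q a m₁ f} := by
      refine ⟨0, fun r hr => ?_⟩
      obtain ⟨g, hg, rfl⟩ := hr
      exact div_nonneg (dirI_nonneg hq0 hq1 _ _) (varI_nonneg hq0 hq1 _ _)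
    have hgle : gapI q a m₁ ≤ dirI q a m₁ G / varI q a m₁ G := csInf_le hbdd hmem
    rw [hvar] at hgle
    have h1 : gapI q a m₁ * varI q a b' f ≤ dirI q a m₁ G := (le_div_iff₀ hvpos).mp hgle
    exact h1.trans hdir

end Helpers5
section Helpers6

variable {q : ℝ} {S T : Finset ℤ} {f g : (ℤ → Bool) → ℝ} {η ζ σ : ℤ → Bool}

lemma condMean_mul_indep (h : Indep S g) (f : (ℤ → Bool) → ℝ) (η : ℤ → Bool) :
    condMean q S (fun σ => g σ * f σ) η = g η * condMean q S f η := by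
  unfold condMean
  rw [Finset.mul_sum]
  exact Finset.sum_congr rfl fun τ _ => by
    show wt q S τ * (g (patch S τ η) * f (patch S τ η)) = g η * (wt q S τ * f (patch S τ η))
    rw [h τ η]; ring

set_option maxHeartbeats 1000000 in
lemma condPoincare (hq0 : 0 ≤ q) (hq1 : q ≤ 1) {a b' m₁ : ℤ} (hbm : b' ≤ m₁)
    (hgap : 0 < gapI q a m₁) (f : (ℤ → Bool) → ℝ) (η : ℤ → Bool) :
    condVar q (Finset.Icc a b') f η ≤ (gapI q a m₁)⁻¹ *
      condMean q (Finset.Icc a b')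
        (fun σ' => ∑ x ∈ Finset.Icc a b', cE b' x σ' * condVar q {x} f σ') η := by
  by_cases hab : a ≤ b'
  · set S := Finset.Icc a b' with hS
    set D := fun σ' => ∑ x ∈ S, cE b' x σ' * condVar q {x} f σ' with hD
    set g := fun ρ => f (override S η ρ) with hg
    have hvar : varI q a b' g = condVar q S f η := by
      unfold varI
      exact condVar_override_self (f := f) (η := η)
    have hdir : dirI q a b' g = condMean q S D η := by
      unfold dirI meanI
      have hfun : (fun σ' => ∑ x ∈ Finset.Icc a b', cE b' x σ' * condVar q {x} g σ')
          = fun σ' => D (override S η σ') := by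
        funext σ'
        rw [hD]
        apply Finset.sum_congr rfl
        intro x hx
        have hxsub : ({x} : Finset ℤ) ⊆ S := by
          intro z hz; rw [Finset.mem_singleton] at hz; subst hz; exact hx
        rw [condVar_override (f := f) (η := η) hxsub]
        congr 1
        by_cases hxb : x = b'
        · subst hxb; unfold cE; simp
        · have hx1 : x + 1 ∈ S := by
            rw [Finset.mem_Icc] at hx ⊢; omega
          unfold cE
          rw [if_neg hxb, if_neg hxb]
          have : override S η σ' (x + 1) = σ' (x + 1) := by
            show (if x + 1 ∈ S then σ' (x+1) else η (x+1)) = σ' (x + 1)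
            rw [if_pos hx1]
          rw [this]
      rw [hfun]
      exact condMean_override_self (f := D) (η := η)
    have hkey := gap_mono_poincare hq0 hq1 hab hbm g
    rw [hvar, hdir] at hkey
    have hinv : (0:ℝ) ≤ (gapI q a m₁)⁻¹ := inv_nonneg.mpr hgap.le
    calc condVar q S f η
        = (gapI q a m₁)⁻¹ * (gapI q a m₁ * condVar q S f η) := by
          field_simp
      _ ≤ (gapI q a m₁)⁻¹ * condMean q S D η := mul_le_mul_of_nonneg_left hkey hinv
  · have hempty : Finset.Icc a b' = ∅ := Finset.Icc_eq_empty (by omega)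
    rw [hempty, condVar_empty, condMean_empty]
    simp

/-- Indicator that the rightmost empty site in `[·,m₁]` is exactly `y`. -/
def ind (m₁ y : ℤ) (σ : ℤ → Bool) : ℝ :=
  if (σ y = false ∧ ∀ z, y < z → z ≤ m₁ → σ z = true) then 1 else 0

lemma ind_nonneg (m₁ y : ℤ) (σ : ℤ → Bool) : 0 ≤ ind m₁ y σ := by
  unfold ind; split <;> norm_num

lemma ind_decomp (m₂ m₁ : ℤ) (σ : ℤ → Bool) :
    (if ∃ x ∈ Finset.Icc m₂ m₁, σ x = false then (1:ℝ) else 0)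
      = ∑ y ∈ Finset.Icc m₂ m₁, ind m₁ y σ := by
  by_cases hP : ∃ x ∈ Finset.Icc m₂ m₁, σ x = false
  · rw [if_pos hP]
    obtain ⟨x₀, hx₀, hx₀f⟩ := hP
    set F := (Finset.Icc m₂ m₁).filter (fun y => σ y = false) with hF
    have hFne : F.Nonempty := ⟨x₀, by rw [hF, Finset.mem_filter]; exact ⟨hx₀, hx₀f⟩⟩
    set y₀ := F.max' hFne with hy₀def
    have hy₀F : y₀ ∈ F := F.max'_mem hFne
    have hy₀ : y₀ ∈ Finset.Icc m₂ m₁ := (Finset.mem_filter.mp hy₀F).1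
    have hy₀f : σ y₀ = false := (Finset.mem_filter.mp hy₀F).2
    rw [Finset.sum_eq_single_of_mem y₀ hy₀]
    · unfold ind
      rw [if_pos]
      refine ⟨hy₀f, fun z hz1 hz2 => ?_⟩
      by_contra hzf
      have hzf' : σ z = false := by
        cases h : σ z
        · rfl
        · exact absurd h hzf
      have hzF : z ∈ F := by
        rw [hF, Finset.mem_filter, Finset.mem_Icc]
        rw [Finset.mem_Icc] at hy₀
        exact ⟨⟨by omega, hz2⟩, hzf'⟩
      have := F.le_max' z hzF
      omega
    · intro y hy hyne
      unfold ind
      rw [if_neg]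
      rintro ⟨hyf, hall⟩
      have hyF : y ∈ F := by rw [hF, Finset.mem_filter]; exact ⟨hy, hyf⟩
      have hle := F.le_max' y hyF
      rw [Finset.mem_Icc] at hy₀
      have : σ y₀ = true := hall y₀ (by omega) hy₀.2
      rw [this] at hy₀f
      exact absurd hy₀f (by simp)
  · rw [if_neg hP]
    symm
    apply Finset.sum_eq_zero
    intro y hy
    unfold ind
    rw [if_neg]
    rintro ⟨hyf, -⟩
    exact hP ⟨y, hy, hyf⟩

lemma ind_indep (m₁ y a : ℤ) : Indep (Finset.Icc a (y-1)) (ind m₁ y) := by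
  intro τ η
  unfold ind
  have h1 : patch (Finset.Icc a (y-1)) τ η y = η y :=
    patch_not_mem (by rw [Finset.mem_Icc]; omega) _ _
  have h2 : ∀ z, y < z → patch (Finset.Icc a (y-1)) τ η z = η z := fun z hz =>
    patch_not_mem (by rw [Finset.mem_Icc]; omega) _ _
  congr 1
  apply propext
  constructor
  · rintro ⟨ha, hb⟩
    exact ⟨by rw [← h1]; exact ha, fun z hz1 hz2 => by rw [← h2 z hz1]; exact hb z hz1 hz2⟩
  · rintro ⟨ha, hb⟩
    exact ⟨by rw [h1]; exact ha, fun z hz1 hz2 => by rw [h2 z hz1]; exact hb z hz1 hz2⟩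

end Helpers6

set_option maxHeartbeats 2000000

/-- **The constrained block term in the bisection method.**  Let `Λ = [a,b]`,
`Λ₁ = [a,m₁]`, `Λ₂ = [m₂,b]` with overlap `I = Λ₁ ∩ Λ₂ = [m₂,m₁]`, and blocks
`B₁ = Λ \ Λ₂ = [a,m₂-1]`, `B₂ = Λ₂`.  With `c₁(σ)` the indicator that `σ` has at least
one zero in `I`, one has
`π_Λ(c₁ · Var_{B₁}(f)) ≤ gap(L_{Λ₁})⁻¹ · π_Λ(Σ_{x ∈ Λ₁} c_x^Λ Var_x(f))`. -/
theorem east_bisection_constrained_term (q : ℝ) (hq : 0 < q) (hq1 : q < 1)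
    (a m₂ m₁ b : ℤ) (h1 : a ≤ m₂) (h2 : m₂ ≤ m₁) (h3 : m₁ ≤ b)
    (f : (ℤ → Bool) → ℝ) (hgap : 0 < gapI q a m₁) :
    meanI q a b (fun σ =>
        (if ∃ x ∈ Finset.Icc m₂ m₁, σ x = false then (1 : ℝ) else 0)
          * condVar q (Finset.Icc a (m₂ - 1)) f σ)
      ≤ (gapI q a m₁)⁻¹ *
        meanI q a b (fun σ => ∑ x ∈ Finset.Icc a m₁, cE b x σ * condVar q {x} f σ) := by
  have hq0 : (0:ℝ) ≤ q := hq.le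
  have hq1' : q ≤ 1 := hq1.le
  set Λ := Finset.Icc a b with hΛ
  set V := fun σ : ℤ → Bool => condVar q (Finset.Icc a (m₂ - 1)) f σ with hV
  set DΛ := fun σ : ℤ → Bool => ∑ x ∈ Finset.Icc a m₁, cE b x σ * condVar q {x} f σ with hDΛ
  set G := (gapI q a m₁)⁻¹ with hG
  have hGnn : (0:ℝ) ≤ G := by rw [hG]; exact inv_nonneg.mpr hgap.le
  have hDnn : ∀ σ, 0 ≤ DΛ σ := fun σ => Finset.sum_nonneg fun x _ =>
    mul_nonneg (cE_nonneg b x σ) (condVar_nonneg hq0 hq1')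
  -- Step 1 : decompose the indicator according to the rightmost empty site
  have hLHS : meanI q a b (fun σ =>
        (if ∃ x ∈ Finset.Icc m₂ m₁, σ x = false then (1 : ℝ) else 0) * V σ)
      = ∑ y ∈ Finset.Icc m₂ m₁, condMean q Λ (fun σ => ind m₁ y σ * V σ) allOnes := by
    unfold meanI
    rw [← condMean_sum]
    apply condMean_congr_patch
    intro τ
    rw [ind_decomp m₂ m₁ (patch Λ τ allOnes), Finset.sum_mul]
  -- Step 2 : the key estimate for a fixed rightmost empty site y
  have key : ∀ y ∈ Finset.Icc m₂ m₁,
      condMean q Λ (fun σ => ind m₁ y σ * V σ) allOnes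
        ≤ G * condMean q Λ (fun σ => ind m₁ y σ * DΛ σ) allOnes := by
    intro y hy
    rw [Finset.mem_Icc] at hy
    set Bk := Finset.Icc a (y - 1) with hBk
    set Rk := Finset.Icc y b with hRk
    have hd : Disjoint Rk Bk := by
      rw [Finset.disjoint_left]
      intro x hx hx'
      rw [hRk, Finset.mem_Icc] at hx; rw [hBk, Finset.mem_Icc] at hx'; omega
    have hU : Rk ∪ Bk = Λ := by
      ext x
      simp only [Finset.mem_union, hRk, hBk, hΛ, Finset.mem_Icc]
      omega
    -- pointwise (in the configuration on Rk) estimate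
    have hpt : ∀ ζ : ℤ → Bool,
        condMean q Bk (fun σ => ind m₁ y σ * V σ) ζ
          ≤ G * condMean q Bk (fun σ => ind m₁ y σ * DΛ σ) ζ := by
      intro ζ
      rw [condMean_mul_indep (ind_indep m₁ y a), condMean_mul_indep (ind_indep m₁ y a)]
      by_cases hζ : ζ y = false ∧ ∀ z, y < z → z ≤ m₁ → ζ z = true
      · have hind : ind m₁ y ζ = 1 := by unfold ind; rw [if_pos hζ]
        rw [hind, one_mul, one_mul]
        -- (a) law of total variance
        have hsplit : Finset.Icc a (m₂ - 1) ∪ Finset.Icc m₂ (y - 1) = Bk := by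
          ext x
          simp only [Finset.mem_union, hBk, Finset.mem_Icc]
          omega
        have hd2 : Disjoint (Finset.Icc a (m₂ - 1)) (Finset.Icc m₂ (y - 1)) := by
          rw [Finset.disjoint_left]
          intro x hx hx'
          rw [Finset.mem_Icc] at hx hx'; omega
        have ha : condMean q Bk V ζ ≤ condVar q Bk f ζ := by
          rw [← hsplit]
          exact total_variance hq0 hq1' hd2
        -- (b) Poincaré inequality on Bk transferred to boundary ζ
        have hbp : condVar q Bk f ζ ≤ G *
            condMean q Bk
              (fun σ' => ∑ x ∈ Bk, cE (y-1) x σ' * condVar q {x} f σ') ζ := by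
          rw [hG]
          exact condPoincare hq0 hq1' (by omega) hgap f ζ
        -- (c) constraint compatibility on the event {rightmost zero at y}
        have hc : condMean q Bk
              (fun σ' => ∑ x ∈ Bk, cE (y-1) x σ' * condVar q {x} f σ') ζ
            ≤ condMean q Bk DΛ ζ := by
          apply condMean_mono hq0 hq1'
          intro τ
          set σ := patch Bk τ ζ with hσ
          show ∑ x ∈ Bk, cE (y-1) x σ * condVar q {x} f σ ≤ DΛ σ
          have hsub : Bk ⊆ Finset.Icc a m₁ := by
            rw [hBk]; exact Finset.Icc_subset_Icc_right (by omega)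
          calc ∑ x ∈ Bk, cE (y-1) x σ * condVar q {x} f σ
              ≤ ∑ x ∈ Bk, cE b x σ * condVar q {x} f σ := by
                apply Finset.sum_le_sum
                intro x hx
                rw [hBk, Finset.mem_Icc] at hx
                apply mul_le_mul_of_nonneg_right _ (condVar_nonneg hq0 hq1')
                by_cases hxy : x = y - 1
                · subst hxy
                  have hyb : y - 1 ≠ b := by omega
                  have hyBk : y ∉ Bk := by rw [hBk, Finset.mem_Icc]; omega
                  have hσy : σ (y - 1 + 1) = false := by
                    have : y - 1 + 1 = y := by omega
                    rw [this, hσ, patch_not_mem hyBk, hζ.1]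
                  unfold cE
                  rw [if_pos rfl, if_neg hyb, hσy]
                  norm_num
                · have hxb : x ≠ b := by omega
                  unfold cE
                  rw [if_neg hxy, if_neg hxb]
            _ ≤ DΛ σ := by
                rw [hDΛ]
                exact Finset.sum_le_sum_of_subset_of_nonneg hsub fun x _ _ =>
                  mul_nonneg (cE_nonneg b x σ) (condVar_nonneg hq0 hq1')
        calc condMean q Bk V ζ ≤ condVar q Bk f ζ := ha
          _ ≤ G * condMean q Bk
              (fun σ' => ∑ x ∈ Bk, cE (y-1) x σ' * condVar q {x} f σ') ζ := hbp
          _ ≤ G * condMean q Bk DΛ ζ := mul_le_mul_of_nonneg_left hc hGnn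
      · have hind : ind m₁ y ζ = 0 := by unfold ind; rw [if_neg hζ]
        rw [hind, zero_mul, zero_mul, mul_zero]
    -- assemble via the tower property over Λ = Rk ∪ Bk
    calc condMean q Λ (fun σ => ind m₁ y σ * V σ) allOnes
        = condMean q Rk (fun ζ => condMean q Bk (fun σ => ind m₁ y σ * V σ) ζ) allOnes := by
          rw [← hU, condMean_union hd]
      _ ≤ condMean q Rk (fun ζ => G * condMean q Bk (fun σ => ind m₁ y σ * DΛ σ) ζ) allOnes :=
          condMean_mono hq0 hq1' fun τ => hpt _
      _ = G * condMean q Rk (fun ζ => condMean q Bk (fun σ => ind m₁ y σ * DΛ σ) ζ) allOnes :=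
          condMean_const_mul G
      _ = G * condMean q Λ (fun σ => ind m₁ y σ * DΛ σ) allOnes := by
          rw [← hU, condMean_union hd]
  -- Step 3 : sum over y and recombine
  have hsum : ∑ y ∈ Finset.Icc m₂ m₁, condMean q Λ (fun σ => ind m₁ y σ * V σ) allOnes
      ≤ ∑ y ∈ Finset.Icc m₂ m₁, G * condMean q Λ (fun σ => ind m₁ y σ * DΛ σ) allOnes :=
    Finset.sum_le_sum key
  have hcomb : ∑ y ∈ Finset.Icc m₂ m₁, G * condMean q Λ (fun σ => ind m₁ y σ * DΛ σ) allOnes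
      = G * condMean q Λ (fun σ => ∑ y ∈ Finset.Icc m₂ m₁, ind m₁ y σ * DΛ σ) allOnes := by
    rw [condMean_sum, Finset.mul_sum]
  have hfinal : condMean q Λ (fun σ => ∑ y ∈ Finset.Icc m₂ m₁, ind m₁ y σ * DΛ σ) allOnes
      ≤ condMean q Λ DΛ allOnes := by
    apply condMean_mono hq0 hq1'
    intro τ
    set σ := patch Λ τ allOnes
    show ∑ y ∈ Finset.Icc m₂ m₁, ind m₁ y σ * DΛ σ ≤ DΛ σ
    rw [← Finset.sum_mul, ← ind_decomp]
    by_cases hP : ∃ x ∈ Finset.Icc m₂ m₁, σ x = false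
    · rw [if_pos hP, one_mul]
    · rw [if_neg hP, zero_mul]; exact hDnn σ
  have hRHS : meanI q a b DΛ = condMean q Λ DΛ allOnes := rfl
  rw [hLHS, hRHS]
  calc ∑ y ∈ Finset.Icc m₂ m₁, condMean q Λ (fun σ => ind m₁ y σ * V σ) allOnes
      ≤ G * condMean q Λ (fun σ => ∑ y ∈ Finset.Icc m₂ m₁, ind m₁ y σ * DΛ σ) allOnes := by
        rw [← hcomb]; exact hsum
    _ ≤ G * condMean q Λ DΛ allOnes := mul_le_mul_of_nonneg_left hfinal hGnn
end
end

section
/- If γ_k ≤ (1 + 1/s_k)·(1 − √ε_k)^{-1}·γ_{k−1} with s_k = ⌊2^{kδ}⌋ and ε_k ≤ (1−q)^{δ_k/8}, δ_k = ⌊2^{k(1−3δ)}⌋, then the infinite product Π_{j≥k₀} (1+1/s_j)/(1−√ε_j) converges, and hence sup_k γ_k < ∞; moreover, as q ↓ 0 the product is bounded above by q^{−a′}·(1/q)^{log₂(1/q)/(2−6δ)} for some constant a′ independent of q. -/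
noncomputable section

/-- `s_k = ⌊2^{kδ}⌋`. -/
def sSeq (δ : ℝ) (k : ℕ) : ℝ := (⌊(2 : ℝ) ^ ((k : ℝ) * δ)⌋ : ℤ)

/-- `δ_k = ⌊2^{k(1-3δ)}⌋`. -/
def dSeq (δ : ℝ) (k : ℕ) : ℝ := (⌊(2 : ℝ) ^ ((k : ℝ) * (1 - 3 * δ))⌋ : ℤ)

open Real Finset Filter

private lemma half_le_floor {x : ℝ} (hx : 1 ≤ x) : x / 2 ≤ ((⌊x⌋ : ℤ) : ℝ) := by
  have h1 : (1 : ℝ) ≤ ((⌊x⌋ : ℤ) : ℝ) := by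
    exact_mod_cast Int.le_floor.mpr (by exact_mod_cast hx)
  rcases le_or_gt x 2 with h | h
  · linarith
  · have := Int.sub_one_lt_floor x
    linarith

private lemma one_le_floor {x : ℝ} (hx : 1 ≤ x) : 1 ≤ ((⌊x⌋ : ℤ) : ℝ) := by
  exact_mod_cast Int.le_floor.mpr (by exact_mod_cast hx)

private lemma rpow_nat_mul (c : ℝ) (i : ℕ) :
    (2 : ℝ) ^ ((i : ℝ) * c) = ((2 : ℝ) ^ c) ^ i := by
  rw [mul_comm, Real.rpow_mul (by norm_num : (0:ℝ) ≤ 2), Real.rpow_natCast]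

private lemma geom_sum_bound {r : ℝ} (h0 : 0 ≤ r) (h1 : r < 1) (s : Finset ℕ) :
    ∑ i ∈ s, r ^ i ≤ (1 - r)⁻¹ := by
  calc ∑ i ∈ s, r ^ i ≤ ∑' i : ℕ, r ^ i :=
        Summable.sum_le_tsum s (fun i _ => pow_nonneg h0 i) (summable_geometric_of_lt_one h0 h1)
    _ = (1 - r)⁻¹ := tsum_geometric_of_lt_one h0 h1


private lemma one_le_prod_real {f : ℕ → ℝ} (hf : ∀ i, 1 ≤ f i) (s : Finset ℕ) :
    1 ≤ ∏ i ∈ s, f i := by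
  classical
  induction s using Finset.induction with
  | empty => simp
  | @insert a s h ih => rw [Finset.prod_insert h]; nlinarith [hf a]

private lemma prod_subset_ge {f : ℕ → ℝ} (hf : ∀ i, 1 ≤ f i) {s t : Finset ℕ} (h : s ⊆ t) :
    ∏ i ∈ s, f i ≤ ∏ i ∈ t, f i := by
  rw [← Finset.prod_sdiff h]
  have h1 := one_le_prod_real hf (t \ s)
  have h2 := one_le_prod_real hf s
  nlinarith

private lemma sum_range_cast (J : ℕ) :
    (∑ j ∈ range J, (j : ℝ)) = J * (J - 1) / 2 := by
  induction J with
  | zero => simp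
  | succ n ih => rw [sum_range_succ, ih]; push_cast; ring

private lemma prod_rpow_sum (c : ℝ) (J : ℕ) :
    ∏ j ∈ range J, (2 : ℝ) ^ ((j : ℝ) * c) = (2 : ℝ) ^ ((∑ j ∈ range J, (j : ℝ)) * c) := by
  induction J with
  | zero => simp
  | succ n ih =>
      rw [prod_range_succ, sum_range_succ, ih, ← Real.rpow_add (by norm_num : (0:ℝ) < 2)]
      ring_nf

/-- key per-term bound: `(1 - √ε)⁻¹ ≤ 1 + 16/(q m)`. -/
private lemma g_le {q εk m : ℝ} (hq0 : 0 < q) (hq1 : q < 1) (hm : 1 ≤ m)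
    (hε0 : 0 ≤ εk) (hε : εk ≤ (1 - q) ^ (m / 8)) :
    (1 - Real.sqrt εk)⁻¹ ≤ 1 + 16 / (q * m) := by
  have hm0 : 0 < m := lt_of_lt_of_le one_pos hm
  have hr0 : (0 : ℝ) < 1 - q := by linarith
  set t : ℝ := q * m / 16 with ht
  have ht0 : 0 < t := by positivity
  -- √εk ≤ (1-q)^(m/16)
  have h1 : Real.sqrt εk ≤ (1 - q) ^ (m / 16) := by
    have := Real.sqrt_le_sqrt hε
    calc Real.sqrt εk ≤ Real.sqrt ((1 - q) ^ (m / 8)) := this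
      _ = ((1 - q) ^ (m / 8)) ^ ((1:ℝ)/2) := by
          rw [Real.sqrt_eq_rpow]
      _ = (1 - q) ^ (m / 16) := by
          rw [← Real.rpow_mul hr0.le]; congr 1; ring
  -- (1-q)^(m/16) ≤ exp (-(q*m/16))
  have h2 : (1 - q) ^ (m / 16) ≤ Real.exp (-t) := by
    have hbase : 1 - q ≤ Real.exp (-q) := by
      have := Real.add_one_le_exp (-q); linarith
    calc (1 - q) ^ (m / 16) ≤ (Real.exp (-q)) ^ (m / 16) :=
          Real.rpow_le_rpow hr0.le hbase (by positivity)
      _ = (Real.exp 1 ^ (-q)) ^ (m / 16) := by rw [Real.exp_one_rpow]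
      _ = Real.exp 1 ^ ((-q) * (m / 16)) := by
          rw [← Real.rpow_mul (Real.exp_pos 1).le]
      _ = Real.exp (-t) := by rw [Real.exp_one_rpow, ht]; ring_nf
  -- exp (-t) ≤ (1+t)⁻¹
  have h3 : Real.exp (-t) ≤ (1 + t)⁻¹ := by
    rw [Real.exp_neg]
    have h4 : 1 + t ≤ Real.exp t := by have := Real.add_one_le_exp t; linarith
    exact inv_anti₀ (by linarith) h4
  have hs : Real.sqrt εk ≤ (1 + t)⁻¹ := h1.trans (h2.trans h3)
  have h5 : t / (1 + t) ≤ 1 - Real.sqrt εk := by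
    have : (1 + t)⁻¹ = 1 - t / (1 + t) := by field_simp; ring
    rw [this] at hs; linarith
  have h6 : (0 : ℝ) < t / (1 + t) := by positivity
  calc (1 - Real.sqrt εk)⁻¹ ≤ (t / (1 + t))⁻¹ := inv_anti₀ h6 h5
    _ = 1 + 1 / t := by field_simp; ring
    _ = 1 + 16 / (q * m) := by rw [ht]; congr 1; field_simp

set_option maxHeartbeats 1000000 in
/-- **Convergence of the iteration in the bisection-constrained method.**
If `γ_k ≤ (1 + 1/s_k)(1-√ε_k)⁻¹ γ_{k-1}` with `s_k = ⌊2^{kδ}⌋` and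
`ε_k ≤ (1-q)^{δ_k/8}`, `δ_k = ⌊2^{k(1-3δ)}⌋`, then the infinite product
`Π_j (1+1/s_j)/(1-√ε_j)` converges and `sup_k γ_k < ∞`; moreover, as `q ↓ 0` the product
is bounded above by `q^{-a'} (1/q)^{log₂(1/q)/(2-6δ)}` for some constant `a'`
independent of `q`. -/
theorem bisection_iteration (δ : ℝ) (hδ : 0 < δ) (hδ' : δ < 1 / 6) :
    (∀ q : ℝ, 0 < q → q < 1 → ∀ ε γ : ℕ → ℝ,
      (∀ k, 0 ≤ ε k) → (∀ k, ε k ≤ (1 - q) ^ (dSeq δ k / 8)) →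
      (∀ k, 0 ≤ γ k) →
      (∀ k : ℕ, 1 ≤ k → γ k ≤ (1 + 1 / sSeq δ k) * (1 - Real.sqrt (ε k))⁻¹ * γ (k - 1)) →
      Multipliable (fun j : ℕ => (1 + 1 / sSeq δ j) * (1 - Real.sqrt (ε j))⁻¹) ∧
      BddAbove (Set.range γ)) ∧
    (∃ a' : ℝ, ∃ q₀ : ℝ, 0 < q₀ ∧ ∀ q : ℝ, 0 < q → q < q₀ → ∀ ε : ℕ → ℝ,
      (∀ k, 0 ≤ ε k) → (∀ k, ε k ≤ (1 - q) ^ (dSeq δ k / 8)) →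
      (∏' j : ℕ, (1 + 1 / sSeq δ j) * (1 - Real.sqrt (ε j))⁻¹)
        ≤ (1 / q) ^ a' * (1 / q) ^ (Real.logb 2 (1 / q) / (2 - 6 * δ))) := by
  have hβ0 : (0 : ℝ) < 1 - 3 * δ := by linarith
  set β : ℝ := 1 - 3 * δ with hβdef
  -- basic facts on the sequences
  have hs1 : ∀ k : ℕ, 1 ≤ sSeq δ k := fun k =>
    one_le_floor (Real.one_le_rpow one_le_two (by positivity))
  have hs_half : ∀ k : ℕ, (2 : ℝ) ^ ((k : ℝ) * δ) / 2 ≤ sSeq δ k := fun k =>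
    half_le_floor (Real.one_le_rpow one_le_two (by positivity))
  have hd1 : ∀ k : ℕ, 1 ≤ dSeq δ k := fun k =>
    one_le_floor (Real.one_le_rpow one_le_two (by positivity))
  have hd_half : ∀ k : ℕ, (2 : ℝ) ^ ((k : ℝ) * β) / 2 ≤ dSeq δ k := fun k =>
    half_le_floor (Real.one_le_rpow one_le_two (by positivity))
  have hd_le : ∀ k : ℕ, dSeq δ k ≤ (2 : ℝ) ^ ((k : ℝ) * β) := fun k => Int.floor_le _
  have hrδ0 : (0:ℝ) ≤ (2:ℝ) ^ (-δ) := by positivity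
  have hrδ1 : (2:ℝ) ^ (-δ) < 1 := Real.rpow_lt_one_of_one_lt_of_neg one_lt_two (by linarith)
  have hrβ0 : (0:ℝ) ≤ (2:ℝ) ^ (-β) := by positivity
  have hrβ1 : (2:ℝ) ^ (-β) < 1 := Real.rpow_lt_one_of_one_lt_of_neg one_lt_two (by linarith)
  -- 1/s_j ≤ 2 * (2^{-δ})^j
  have hs_bound : ∀ j : ℕ, 1 / sSeq δ j ≤ 2 * ((2:ℝ) ^ (-δ)) ^ j := by
    intro j
    have h2 : (0:ℝ) < (2 : ℝ) ^ ((j : ℝ) * δ) := by positivity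
    have := hs_half j
    calc 1 / sSeq δ j ≤ 1 / ((2 : ℝ) ^ ((j : ℝ) * δ) / 2) := by
          apply one_div_le_one_div_of_le (by positivity) this
      _ = 2 * (2 : ℝ) ^ ((j : ℝ) * (-δ)) := by
          rw [one_div_div, show (j : ℝ) * (-δ) = -((j:ℝ) * δ) by ring,
            Real.rpow_neg (by norm_num : (0:ℝ) ≤ 2), div_eq_mul_inv]
      _ = 2 * ((2:ℝ) ^ (-δ)) ^ j := by rw [rpow_nat_mul]
  -- master facts for a given q
  have master : ∀ q : ℝ, 0 < q → q < 1 → ∀ ε : ℕ → ℝ,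
      (∀ k, 0 ≤ ε k) → (∀ k, ε k ≤ (1 - q) ^ (dSeq δ k / 8)) →
      (∀ j, 0 < 1 - Real.sqrt (ε j)) ∧
      (∀ j, 1 ≤ (1 + 1 / sSeq δ j) * (1 - Real.sqrt (ε j))⁻¹) ∧
      (∀ j, (1 - Real.sqrt (ε j))⁻¹ ≤ 1 + 16 / (q * dSeq δ j)) ∧
      Multipliable (fun j : ℕ => (1 + 1 / sSeq δ j) * (1 - Real.sqrt (ε j))⁻¹) := by
    intro q hq0 hq1 ε hε0 hεle
    have hεlt1 : ∀ j, ε j < 1 := by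
      intro j
      refine lt_of_le_of_lt (hεle j) ?_
      exact Real.rpow_lt_one (by linarith) (by linarith)
        (by have := hd1 j; positivity)
    have hsqrt : ∀ j, 0 < 1 - Real.sqrt (ε j) := by
      intro j
      have : Real.sqrt (ε j) < 1 := by
        rw [show (1:ℝ) = Real.sqrt 1 by simp]
        exact Real.sqrt_lt_sqrt (hε0 j) (by simpa using hεlt1 j)
      linarith
    have hg1 : ∀ j, 1 ≤ (1 - Real.sqrt (ε j))⁻¹ := by
      intro j
      rw [le_inv_comm₀ one_pos (hsqrt j)]
      have := Real.sqrt_nonneg (ε j); linarith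
    have hf1 : ∀ j, 1 ≤ 1 + 1 / sSeq δ j := by
      intro j
      have := hs1 j
      have : 0 < 1 / sSeq δ j := by positivity
      linarith
    have hterm1 : ∀ j, 1 ≤ (1 + 1 / sSeq δ j) * (1 - Real.sqrt (ε j))⁻¹ := by
      intro j
      calc (1:ℝ) = 1 * 1 := by ring
        _ ≤ (1 + 1 / sSeq δ j) * (1 - Real.sqrt (ε j))⁻¹ :=
            mul_le_mul (hf1 j) (hg1 j) one_pos.le (by linarith [hf1 j])
    have hgle : ∀ j, (1 - Real.sqrt (ε j))⁻¹ ≤ 1 + 16 / (q * dSeq δ j) := by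
      intro j
      exact g_le hq0 hq1 (hd1 j) (hε0 j) (hεle j)
    refine ⟨hsqrt, hterm1, hgle, ?_⟩
    -- multipliability via exp/log
    set T : ℕ → ℝ := fun j => (1 + 1 / sSeq δ j) * (1 - Real.sqrt (ε j))⁻¹ with hT
    have hTpos : ∀ j, 0 < T j := fun j => lt_of_lt_of_le one_pos (hterm1 j)
    set w : ℕ → ℝ := fun j => 2 * ((2:ℝ) ^ (-δ)) ^ j + (96 / q) * ((2:ℝ) ^ (-β)) ^ j with hw
    have hTle : ∀ j, T j ≤ 1 + w j := by
      intro j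
      have hgj : (1 - Real.sqrt (ε j))⁻¹ ≤ 1 + (32 / q) * ((2:ℝ) ^ (-β)) ^ j := by
        refine (hgle j).trans ?_
        have hdj : (2 : ℝ) ^ ((j : ℝ) * β) / 2 ≤ dSeq δ j := hd_half j
        have h2 : (0:ℝ) < (2 : ℝ) ^ ((j : ℝ) * β) := by positivity
        have : 16 / (q * dSeq δ j) ≤ (32 / q) * ((2:ℝ) ^ (-β)) ^ j := by
          have hq' : 0 < q := hq0
          have hd0 : 0 < dSeq δ j := lt_of_lt_of_le one_pos (hd1 j)
          calc 16 / (q * dSeq δ j) ≤ 16 / (q * ((2 : ℝ) ^ ((j : ℝ) * β) / 2)) := by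
                rw [div_le_div_iff_of_pos_left (by norm_num) (by positivity) (by positivity)]
                exact mul_le_mul_of_nonneg_left hdj hq0.le
            _ = (32 / q) * (2 : ℝ) ^ ((j : ℝ) * (-β)) := by
                rw [show (j : ℝ) * (-β) = -((j:ℝ) * β) by ring,
                  Real.rpow_neg (by norm_num)]
                field_simp
                norm_num
            _ = (32 / q) * ((2:ℝ) ^ (-β)) ^ j := by rw [rpow_nat_mul]
        linarith
      have hfj : 1 + 1 / sSeq δ j ≤ 1 + 2 * ((2:ℝ) ^ (-δ)) ^ j := by
        have := hs_bound j; linarith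
      have hu0 : (0:ℝ) ≤ 2 * ((2:ℝ) ^ (-δ)) ^ j := by positivity
      have hu2 : 2 * ((2:ℝ) ^ (-δ)) ^ j ≤ 2 := by
        have : ((2:ℝ) ^ (-δ)) ^ j ≤ 1 := pow_le_one₀ hrδ0 hrδ1.le
        linarith
      have hv0 : (0:ℝ) ≤ (32 / q) * ((2:ℝ) ^ (-β)) ^ j := by positivity
      calc T j ≤ (1 + 2 * ((2:ℝ) ^ (-δ)) ^ j) * (1 + (32 / q) * ((2:ℝ) ^ (-β)) ^ j) := by
            apply mul_le_mul hfj hgj (by linarith [hg1 j]) (by linarith)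
        _ ≤ 1 + w j := by
            rw [hw]; simp only []
            have hexp : (1 + 2 * ((2:ℝ) ^ (-δ)) ^ j) * (1 + (32 / q) * ((2:ℝ) ^ (-β)) ^ j)
                = 1 + 2 * ((2:ℝ) ^ (-δ)) ^ j + (32 / q) * ((2:ℝ) ^ (-β)) ^ j
                  + (2 * ((2:ℝ) ^ (-δ)) ^ j) * ((32 / q) * ((2:ℝ) ^ (-β)) ^ j) := by ring
            rw [hexp]
            have : (2 * ((2:ℝ) ^ (-δ)) ^ j) * ((32 / q) * ((2:ℝ) ^ (-β)) ^ j)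
                ≤ 2 * ((32 / q) * ((2:ℝ) ^ (-β)) ^ j) := by
              apply mul_le_mul_of_nonneg_right hu2 hv0
            have h96 : (96 / q) * ((2:ℝ) ^ (-β)) ^ j
                = (32 / q) * ((2:ℝ) ^ (-β)) ^ j + 2 * ((32 / q) * ((2:ℝ) ^ (-β)) ^ j) := by
              ring
            linarith
    have hwsum : Summable w := by
      apply Summable.add
      · exact (summable_geometric_of_lt_one hrδ0 hrδ1).mul_left 2
      · exact (summable_geometric_of_lt_one hrβ0 hrβ1).mul_left (96 / q)
    have hlog : Summable (fun j => Real.log (T j)) := by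
      apply Summable.of_nonneg_of_le (fun j => Real.log_nonneg (hterm1 j)) _ hwsum
      intro j
      calc Real.log (T j) ≤ T j - 1 := Real.log_le_sub_one_of_pos (hTpos j)
        _ ≤ w j := by linarith [hTle j]
    have hprod := hlog.hasSum.rexp
    have heq : (Real.exp ∘ fun j => Real.log (T j)) = T := by
      funext j; simp [Function.comp, Real.exp_log (hTpos j)]
    rw [heq] at hprod
    exact hprod.multipliable
  constructor
  · -- Part 1
    intro q hq0 hq1 ε γ hε0 hεle hγ0 hγrec
    obtain ⟨hsqrt, hterm1, hgle, hmul⟩ := master q hq0 hq1 ε hε0 hεle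
    refine ⟨hmul, ?_⟩
    set T : ℕ → ℝ := fun j => (1 + 1 / sSeq δ j) * (1 - Real.sqrt (ε j))⁻¹ with hT
    have hmono : Monotone (fun n => ∏ j ∈ range n, T j) :=
      fun n m hnm => prod_subset_ge hterm1 (range_subset_range.mpr hnm)
    have hle_tprod : ∀ n, ∏ j ∈ range n, T j ≤ ∏' j, T j :=
      fun n => hmono.ge_of_tendsto hmul.hasProd.tendsto_prod_nat n
    have key : ∀ k, γ k ≤ γ 0 * ∏ j ∈ Icc 1 k, T j := by
      intro k
      induction k with
      | zero => simp
      | succ n ih =>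
          have h1 : γ (n+1) ≤ T (n+1) * γ n := by
            have h := hγrec (n+1) (by omega)
            rw [Nat.add_sub_cancel] at h
            exact h
          have h2 : T (n+1) * γ n ≤ T (n+1) * (γ 0 * ∏ j ∈ Icc 1 n, T j) :=
            mul_le_mul_of_nonneg_left ih (le_trans zero_le_one (hterm1 (n+1)))
          have h3 : ∏ j ∈ Icc 1 (n+1), T j = (∏ j ∈ Icc 1 n, T j) * T (n+1) :=
            prod_Icc_succ_top (Nat.succ_le_succ (Nat.zero_le n)) T
          calc γ (n+1) ≤ T (n+1) * (γ 0 * ∏ j ∈ Icc 1 n, T j) := h1.trans h2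
            _ = γ 0 * ∏ j ∈ Icc 1 (n+1), T j := by rw [h3]; ring
    refine ⟨γ 0 * ∏' j, T j, ?_⟩
    rintro x ⟨k, rfl⟩
    have h4 : ∏ j ∈ Icc 1 k, T j ≤ ∏ j ∈ range (k+1), T j := by
      apply prod_subset_ge hterm1
      intro j hj
      simp only [mem_Icc] at hj
      simp only [mem_range]
      omega
    calc γ k ≤ γ 0 * ∏ j ∈ Icc 1 k, T j := key k
      _ ≤ γ 0 * ∏ j ∈ range (k+1), T j := mul_le_mul_of_nonneg_left h4 (hγ0 0)
      _ ≤ γ 0 * ∏' j, T j := mul_le_mul_of_nonneg_left (hle_tprod (k+1)) (hγ0 0)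
  · -- Part 2
    set C₁ : ℝ := Real.exp (2 * (1 - (2:ℝ) ^ (-δ))⁻¹) with hC₁
    set C₂ : ℝ := Real.exp (32 * (1 - (2:ℝ) ^ (-β))⁻¹) with hC₂
    have hC₁1 : 1 ≤ C₁ := by
      have h1 : (0:ℝ) ≤ (1 - (2:ℝ) ^ (-δ))⁻¹ := by
        apply inv_nonneg.mpr; linarith
      have h2 := Real.add_one_le_exp (2 * (1 - (2:ℝ) ^ (-δ))⁻¹)
      rw [hC₁]; linarith
    have hC₂1 : 1 ≤ C₂ := by
      have h1 : (0:ℝ) ≤ (1 - (2:ℝ) ^ (-β))⁻¹ := by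
        apply inv_nonneg.mpr; linarith
      have h2 := Real.add_one_le_exp (32 * (1 - (2:ℝ) ^ (-β))⁻¹)
      rw [hC₂]; linarith
    refine ⟨Real.logb 2 (C₁ * C₂) + 7 + 6 / β, 1/2, by norm_num, ?_⟩
    intro q hq0 hq2 ε hε0 hεle
    have hq1 : q < 1 := by linarith
    obtain ⟨hsqrt, hterm1, hgle, hmul⟩ := master q hq0 hq1 ε hε0 hεle
    set T : ℕ → ℝ := fun j => (1 + 1 / sSeq δ j) * (1 - Real.sqrt (ε j))⁻¹ with hT
    have hQ2 : (2:ℝ) ≤ 1/q := by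
      rw [le_div_iff₀ hq0]; linarith
    have hQ1 : (1:ℝ) < 1/q := by linarith
    have hQ0 : (0:ℝ) < 1/q := by positivity
    set L : ℝ := Real.logb 2 (1/q) / β with hL
    have hlogb_pos : 0 < Real.logb 2 (1/q) := Real.logb_pos one_lt_two hQ1
    have hL0 : 0 < L := by rw [hL]; positivity
    set J : ℕ := ⌈L⌉₊ with hJ
    have hJ1 : 1 ≤ J := Nat.one_le_ceil_iff.mpr hL0
    have hLJ : L ≤ (J:ℝ) := Nat.le_ceil L
    have hJL : (J:ℝ) < L + 1 := Nat.ceil_lt_add_one hL0.le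
    have h2L : (2:ℝ) ^ (Real.logb 2 (1/q)) = 1/q :=
      Real.rpow_logb (by norm_num) (by norm_num) hQ0
    have h2JL : 1/q ≤ (2:ℝ) ^ ((J:ℝ) * β) := by
      rw [← h2L]
      apply Real.rpow_le_rpow_of_exponent_le one_le_two
      calc Real.logb 2 (1/q) = L * β := by rw [hL]; field_simp
        _ ≤ (J:ℝ) * β := mul_le_mul_of_nonneg_right hLJ hβ0.le
    -- the finite-product bound
    have key : ∀ N : ℕ, ∏ j ∈ range N, T j ≤
        (C₁ * C₂) * ((1/q) ^ ((7:ℝ) + 6/β) * (1/q) ^ (L/2)) := by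
      intro N
      have hfprod : ∏ j ∈ range N, (1 + 1 / sSeq δ j) ≤ C₁ := by
        calc ∏ j ∈ range N, (1 + 1 / sSeq δ j)
            ≤ ∏ j ∈ range N, Real.exp (2 * ((2:ℝ) ^ (-δ)) ^ j) := by
              apply Finset.prod_le_prod
              · intro j _
                have := hs1 j
                have : (0:ℝ) < 1 / sSeq δ j := by positivity
                linarith
              · intro j _
                have h1 : 1 + 1 / sSeq δ j ≤ 1 + 2 * ((2:ℝ) ^ (-δ)) ^ j := by
                  linarith [hs_bound j]
                refine h1.trans ?_
                have := Real.add_one_le_exp (2 * ((2:ℝ) ^ (-δ)) ^ j)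
                linarith
          _ = Real.exp (∑ j ∈ range N, 2 * ((2:ℝ) ^ (-δ)) ^ j) := (Real.exp_sum _ _).symm
          _ ≤ C₁ := by
              rw [hC₁]
              apply Real.exp_le_exp.mpr
              rw [← Finset.mul_sum]
              have := geom_sum_bound hrδ0 hrδ1 (range N)
              nlinarith
      -- g product
      set g : ℕ → ℝ := fun j => (1 - Real.sqrt (ε j))⁻¹ with hg
      have hg1 : ∀ j, 1 ≤ g j := by
        intro j
        rw [hg, le_inv_comm₀ one_pos (hsqrt j)]
        have := Real.sqrt_nonneg (ε j); linarith
      set M : ℕ := max N J with hM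
      have hgN : ∏ j ∈ range N, g j ≤ ∏ j ∈ range M, g j :=
        prod_subset_ge hg1 (range_subset_range.mpr (le_max_left N J))
      have hsplit : ∏ j ∈ range M, g j = (∏ j ∈ range J, g j) * ∏ j ∈ Ico J M, g j := by
        rw [range_eq_Ico, ← prod_Ico_consecutive g (Nat.zero_le J) (le_max_right N J),
          ← range_eq_Ico]
      -- tail bound
      have htail : ∏ j ∈ Ico J M, g j ≤ C₂ := by
        have hstep : ∀ j ∈ Ico J M, g j ≤ Real.exp (32 * ((2:ℝ)^(-β)) ^ (j - J)) := by
          intro j hj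
          rw [mem_Ico] at hj
          have hjJ : J ≤ j := hj.1
          have hd0 : (0:ℝ) < dSeq δ j := lt_of_lt_of_le one_pos (hd1 j)
          have h16 : 16 / (q * dSeq δ j) ≤ 32 * ((2:ℝ)^(-β)) ^ (j - J) := by
            have hqd2 : (2:ℝ) ^ (((j:ℝ) - (J:ℝ)) * β) / 2 ≤ q * dSeq δ j := by
              have e1 : (2:ℝ) ^ ((j:ℝ) * β) = (2:ℝ) ^ ((J:ℝ) * β) * (2:ℝ) ^ (((j:ℝ) - (J:ℝ)) * β) := by
                rw [← Real.rpow_add (by norm_num : (0:ℝ) < 2)]; ring_nf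
              have e2 : 1 ≤ q * (2:ℝ) ^ ((J:ℝ) * β) := by
                have := mul_le_mul_of_nonneg_left h2JL hq0.le
                rw [mul_one_div, div_self hq0.ne'] at this
                linarith
              calc (2:ℝ) ^ (((j:ℝ) - (J:ℝ)) * β) / 2
                  ≤ (q * (2:ℝ) ^ ((J:ℝ) * β)) * (2:ℝ) ^ (((j:ℝ) - (J:ℝ)) * β) / 2 := by
                    gcongr
                    nlinarith [Real.rpow_pos_of_pos (by norm_num : (0:ℝ) < 2) (((j:ℝ) - (J:ℝ)) * β)]
                _ = q * ((2:ℝ) ^ ((j:ℝ) * β) / 2) := by rw [e1]; ring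
                _ ≤ q * dSeq δ j := mul_le_mul_of_nonneg_left (hd_half j) hq0.le
            have hpos : (0:ℝ) < (2:ℝ) ^ (((j:ℝ) - (J:ℝ)) * β) := by positivity
            have e3 : ((2:ℝ)^(-β)) ^ (j - J) = ((2:ℝ) ^ (((j:ℝ) - (J:ℝ)) * β))⁻¹ := by
              rw [← rpow_nat_mul (-β) (j - J)]
              rw [← Real.rpow_neg (by norm_num : (0:ℝ) ≤ 2)]
              congr 1
              have : ((j - J : ℕ) : ℝ) = (j:ℝ) - (J:ℝ) := by
                push_cast [Nat.cast_sub hjJ]; ring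
              rw [this]; ring
            rw [e3]
            rw [div_le_iff₀ (by positivity : (0:ℝ) < q * dSeq δ j)]
            rw [inv_eq_one_div]
            have hqd3 : (2:ℝ) ^ (((j:ℝ) - (J:ℝ)) * β) * 16 ≤ (q * dSeq δ j) * 32 := by
              nlinarith
            calc (16:ℝ) = (2:ℝ) ^ (((j:ℝ) - (J:ℝ)) * β) * 16 / (2:ℝ) ^ (((j:ℝ) - (J:ℝ)) * β) := by
                  field_simp
              _ ≤ (q * dSeq δ j) * 32 / (2:ℝ) ^ (((j:ℝ) - (J:ℝ)) * β) := by
                  gcongr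
              _ = 32 * (1 / (2:ℝ) ^ (((j:ℝ) - (J:ℝ)) * β)) * (q * dSeq δ j) := by ring
          calc g j ≤ 1 + 16 / (q * dSeq δ j) := hgle j
            _ ≤ 1 + 32 * ((2:ℝ)^(-β)) ^ (j - J) := by linarith
            _ ≤ Real.exp (32 * ((2:ℝ)^(-β)) ^ (j - J)) := by
                have := Real.add_one_le_exp (32 * ((2:ℝ)^(-β)) ^ (j - J)); linarith
        calc ∏ j ∈ Ico J M, g j
            ≤ ∏ j ∈ Ico J M, Real.exp (32 * ((2:ℝ)^(-β)) ^ (j - J)) :=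
              Finset.prod_le_prod (fun j hj => le_trans zero_le_one (hg1 j)) hstep
          _ = Real.exp (∑ j ∈ Ico J M, 32 * ((2:ℝ)^(-β)) ^ (j - J)) := (Real.exp_sum _ _).symm
          _ ≤ C₂ := by
              rw [hC₂]
              apply Real.exp_le_exp.mpr
              rw [← Finset.mul_sum]
              have hre : ∑ j ∈ Ico J M, ((2:ℝ)^(-β)) ^ (j - J)
                  = ∑ i ∈ range (M - J), ((2:ℝ)^(-β)) ^ i := by
                rw [Finset.sum_Ico_eq_sum_range]
                apply Finset.sum_congr rfl
                intro i _
                congr 1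
                omega
              rw [hre]
              have := geom_sum_bound hrβ0 hrβ1 (range (M - J))
              nlinarith
      -- head bound
      have hhead : ∏ j ∈ range J, g j ≤
          (1/q) ^ ((6:ℝ) + 6/β) * (1/q) ^ (((J:ℝ) + 1)/2) := by
        have hstep : ∀ j ∈ range J, g j ≤ (64 / q) * (2:ℝ) ^ ((j:ℝ) * (-β)) := by
          intro j hj
          rw [mem_range] at hj
          have hd0 : (0:ℝ) < dSeq δ j := lt_of_lt_of_le one_pos (hd1 j)
          -- d_j < 1/q
          have hdlt : dSeq δ j < 1/q := by
            refine lt_of_le_of_lt (hd_le j) ?_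
            rw [← h2L]
            apply Real.rpow_lt_rpow_of_exponent_lt one_lt_two
            have hjL : (j:ℝ) < L := by
              have : (j:ℝ) ≤ (J:ℝ) - 1 := by
                have : (j:ℝ) + 1 ≤ (J:ℝ) := by exact_mod_cast hj
                linarith
              linarith
            calc (j:ℝ) * β < L * β := by
                  apply mul_lt_mul_of_pos_right hjL hβ0
              _ = Real.logb 2 (1/q) := by rw [hL]; field_simp
          have hqd1 : q * dSeq δ j < 1 := by
            have := mul_lt_mul_of_pos_left hdlt hq0
            rw [mul_one_div, div_self hq0.ne'] at this
            linarith
          have h1 : g j ≤ 32 / (q * dSeq δ j) := by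
            have h2 : (1:ℝ) ≤ 16 / (q * dSeq δ j) := by
              rw [le_div_iff₀ (by positivity)]
              linarith
            calc g j ≤ 1 + 16 / (q * dSeq δ j) := hgle j
              _ ≤ 16 / (q * dSeq δ j) + 16 / (q * dSeq δ j) := by linarith
              _ = 32 / (q * dSeq δ j) := by ring
          refine h1.trans ?_
          have hdj : (2 : ℝ) ^ ((j : ℝ) * β) / 2 ≤ dSeq δ j := hd_half j
          have h2 : (0:ℝ) < (2 : ℝ) ^ ((j : ℝ) * β) := by positivity
          calc 32 / (q * dSeq δ j) ≤ 32 / (q * ((2 : ℝ) ^ ((j : ℝ) * β) / 2)) := by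
                rw [div_le_div_iff_of_pos_left (by norm_num) (by positivity) (by positivity)]
                exact mul_le_mul_of_nonneg_left hdj hq0.le
            _ = (64 / q) * (2:ℝ) ^ ((j:ℝ) * (-β)) := by
                rw [show (j : ℝ) * (-β) = -((j:ℝ) * β) by ring, Real.rpow_neg (by norm_num)]
                field_simp
                norm_num
        have hprodle : ∏ j ∈ range J, g j
            ≤ ∏ j ∈ range J, ((64 / q) * (2:ℝ) ^ ((j:ℝ) * (-β))) :=
          Finset.prod_le_prod (fun j _ => le_trans zero_le_one (hg1 j)) hstep
        have hfactor : ∏ j ∈ range J, ((64 / q) * (2:ℝ) ^ ((j:ℝ) * (-β)))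
            = (64 / q) ^ J * (2:ℝ) ^ ((∑ j ∈ range J, (j:ℝ)) * (-β)) := by
          rw [Finset.prod_mul_distrib, Finset.prod_const, card_range, prod_rpow_sum]
        have hS : (∑ j ∈ range J, (j:ℝ)) = (J:ℝ) * ((J:ℝ) - 1) / 2 := sum_range_cast J
        -- 2^{S * (-β)} ≤ (1/q)^{-(J-1)/2}
        have hSbound : (2:ℝ) ^ ((∑ j ∈ range J, (j:ℝ)) * (-β))
            ≤ (1/q) ^ (-(((J:ℝ) - 1)/2)) := by
          have e1 : (∑ j ∈ range J, (j:ℝ)) * (-β) = ((J:ℝ) * β) * (-(((J:ℝ) - 1)/2)) := by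
            rw [hS]; ring
          rw [e1, Real.rpow_mul (by norm_num : (0:ℝ) ≤ 2)]
          have hJm1 : (0:ℝ) ≤ ((J:ℝ) - 1)/2 := by
            have : (1:ℝ) ≤ (J:ℝ) := by exact_mod_cast hJ1
            linarith
          rw [Real.rpow_neg (by positivity), Real.rpow_neg hQ0.le]
          apply inv_anti₀ (by positivity)
          exact Real.rpow_le_rpow hQ0.le h2JL hJm1
        have hpow : (64 / q) ^ J = (64:ℝ) ^ ((J:ℝ)) * (1/q) ^ ((J:ℝ)) := by
          rw [← Real.rpow_natCast (64/q) J, show (64:ℝ)/q = 64 * (1/q) by ring,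
            Real.mul_rpow (by norm_num) hQ0.le, Real.rpow_natCast, Real.rpow_natCast,
            ← Real.rpow_natCast (64:ℝ) J, ← Real.rpow_natCast (1/q) J]
        have h64 : (64:ℝ) ^ ((J:ℝ)) ≤ (1/q) ^ ((6:ℝ) + 6/β) := by
          have h64L : (64:ℝ) ^ ((J:ℝ)) ≤ (64:ℝ) ^ (L + 1) :=
            Real.rpow_le_rpow_of_exponent_le (by norm_num) hJL.le
          refine h64L.trans ?_
          have e2 : (64:ℝ) = (2:ℝ) ^ ((6:ℝ)) := by
            rw [show ((6:ℝ)) = ((6:ℕ):ℝ) by norm_num, Real.rpow_natCast]; norm_num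
          have e3 : (64:ℝ) ^ (L+1) = (2:ℝ) ^ ((6:ℝ) * (L+1)) := by
            rw [e2, ← Real.rpow_mul (by norm_num : (0:ℝ) ≤ 2)]
          rw [e3]
          have e4 : (1/q) ^ ((6:ℝ) + 6/β) = (2:ℝ) ^ (Real.logb 2 (1/q) * ((6:ℝ) + 6/β)) := by
            rw [Real.rpow_mul (by norm_num : (0:ℝ) ≤ 2), h2L]
          rw [e4]
          apply Real.rpow_le_rpow_of_exponent_le one_le_two
          have hlogb2 : (1:ℝ) ≤ Real.logb 2 (1/q) := by
            calc (1:ℝ) = Real.logb 2 2 := by simp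
              _ ≤ Real.logb 2 (1/q) :=
                Real.logb_le_logb_of_le one_lt_two (by norm_num) hQ2
          have e5 : L = Real.logb 2 (1/q) / β := hL
          rw [e5]
          have h6 : (6:ℝ) ≤ Real.logb 2 (1/q) * 6 := by nlinarith
          have h7 : Real.logb 2 (1/q) * (6 + 6/β)
              = 6 * (Real.logb 2 (1/q)/β) + Real.logb 2 (1/q) * 6 := by ring
          rw [h7]
          linarith [h6]
        have hQJ : (1/q) ^ ((J:ℝ)) * (1/q) ^ (-(((J:ℝ) - 1)/2))
            = (1/q) ^ (((J:ℝ) + 1)/2) := by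
          rw [← Real.rpow_add hQ0]; ring_nf
        calc ∏ j ∈ range J, g j
            ≤ (64 / q) ^ J * (2:ℝ) ^ ((∑ j ∈ range J, (j:ℝ)) * (-β)) := by
              rw [← hfactor]; exact hprodle
          _ ≤ (64:ℝ) ^ ((J:ℝ)) * (1/q) ^ ((J:ℝ)) * (1/q) ^ (-(((J:ℝ) - 1)/2)) := by
              rw [hpow]
              apply mul_le_mul_of_nonneg_left hSbound (by positivity)
          _ = (64:ℝ) ^ ((J:ℝ)) * (1/q) ^ (((J:ℝ) + 1)/2) := by
              rw [mul_assoc, hQJ]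
          _ ≤ (1/q) ^ ((6:ℝ) + 6/β) * (1/q) ^ (((J:ℝ) + 1)/2) := by
              apply mul_le_mul_of_nonneg_right h64 (by positivity)
      -- combine
      have hJhalf : (1/q) ^ (((J:ℝ) + 1)/2) ≤ (1/q) ^ (L/2 + 1) := by
        apply Real.rpow_le_rpow_of_exponent_le hQ1.le
        linarith
      have hgprod : ∏ j ∈ range N, g j ≤
          ((1/q) ^ ((6:ℝ) + 6/β) * (1/q) ^ (L/2 + 1)) * C₂ := by
        calc ∏ j ∈ range N, g j ≤ ∏ j ∈ range M, g j := hgN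
          _ = (∏ j ∈ range J, g j) * ∏ j ∈ Ico J M, g j := hsplit
          _ ≤ ((1/q) ^ ((6:ℝ) + 6/β) * (1/q) ^ (((J:ℝ) + 1)/2)) * C₂ := by
              apply mul_le_mul hhead htail
                (Finset.prod_nonneg (fun j _ => le_trans zero_le_one (hg1 j)))
                (by positivity)
          _ ≤ ((1/q) ^ ((6:ℝ) + 6/β) * (1/q) ^ (L/2 + 1)) * C₂ := by
              apply mul_le_mul_of_nonneg_right _ (by positivity)
              exact mul_le_mul_of_nonneg_left hJhalf (by positivity)
      have hTsplit : ∏ j ∈ range N, T j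
          = (∏ j ∈ range N, (1 + 1 / sSeq δ j)) * ∏ j ∈ range N, g j := by
        rw [hT, ← Finset.prod_mul_distrib]
      have hfnonneg : (0:ℝ) ≤ ∏ j ∈ range N, (1 + 1 / sSeq δ j) := by
        apply prod_nonneg
        intro j _
        have := hs1 j
        have : (0:ℝ) < 1 / sSeq δ j := by positivity
        linarith
      have hexp_comb : (1/q) ^ ((6:ℝ) + 6/β) * (1/q) ^ (L/2 + 1)
          = (1/q) ^ ((7:ℝ) + 6/β) * (1/q) ^ (L/2) := by
        rw [← Real.rpow_add hQ0, ← Real.rpow_add hQ0]; ring_nf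
      calc ∏ j ∈ range N, T j
          = (∏ j ∈ range N, (1 + 1 / sSeq δ j)) * ∏ j ∈ range N, g j := hTsplit
        _ ≤ C₁ * (((1/q) ^ ((6:ℝ) + 6/β) * (1/q) ^ (L/2 + 1)) * C₂) := by
            apply mul_le_mul hfprod hgprod
              (Finset.prod_nonneg (fun j _ => le_trans zero_le_one (hg1 j))) (by linarith)
        _ = (C₁ * C₂) * ((1/q) ^ ((6:ℝ) + 6/β) * (1/q) ^ (L/2 + 1)) := by ring
        _ = (C₁ * C₂) * ((1/q) ^ ((7:ℝ) + 6/β) * (1/q) ^ (L/2)) := by rw [hexp_comb]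
    -- from finite products to tprod
    have htprod : ∏' j, T j ≤ (C₁ * C₂) * ((1/q) ^ ((7:ℝ) + 6/β) * (1/q) ^ (L/2)) :=
      hmul.tprod_le_of_prod_range_le key
    -- absorb C₁C₂ into the power
    have hCC : C₁ * C₂ ≤ (1/q) ^ (Real.logb 2 (C₁ * C₂)) := by
      have hCC0 : (0:ℝ) < C₁ * C₂ := by nlinarith
      have := Real.rpow_logb (by norm_num : (0:ℝ) < 2) (by norm_num : (2:ℝ) ≠ 1) hCC0
      calc C₁ * C₂ = (2:ℝ) ^ (Real.logb 2 (C₁ * C₂)) := this.symm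
        _ ≤ (1/q) ^ (Real.logb 2 (C₁ * C₂)) := by
            apply Real.rpow_le_rpow (by norm_num) hQ2
            apply Real.logb_nonneg one_lt_two
            nlinarith
    have hfinal : (C₁ * C₂) * ((1/q) ^ ((7:ℝ) + 6/β) * (1/q) ^ (L/2))
        ≤ (1/q) ^ (Real.logb 2 (C₁ * C₂) + 7 + 6/β) * (1/q) ^ (Real.logb 2 (1/q) / (2 - 6*δ)) := by
      have e1 : (1/q) ^ (Real.logb 2 (C₁ * C₂) + 7 + 6/β)
          = (1/q) ^ (Real.logb 2 (C₁ * C₂)) * (1/q) ^ ((7:ℝ) + 6/β) := by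
        rw [← Real.rpow_add hQ0]; ring_nf
      have e2 : L/2 = Real.logb 2 (1/q) / (2 - 6*δ) := by
        rw [hL, div_div]
        congr 1
        rw [hβdef]; ring
      rw [e1, ← e2]
      have h1 : (0:ℝ) ≤ (1/q) ^ ((7:ℝ) + 6/β) * (1/q) ^ (L/2) := by positivity
      calc (C₁ * C₂) * ((1/q) ^ ((7:ℝ) + 6/β) * (1/q) ^ (L/2))
          ≤ (1/q) ^ (Real.logb 2 (C₁ * C₂)) * ((1/q) ^ ((7:ℝ) + 6/β) * (1/q) ^ (L/2)) :=
            mul_le_mul_of_nonneg_right hCC h1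
        _ = (1/q) ^ (Real.logb 2 (C₁ * C₂)) * (1/q) ^ ((7:ℝ) + 6/β) * (1/q) ^ (L/2) := by ring
    exact htprod.trans hfinal
end
end
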